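/- arXiv:2508.08802 — 12 statements merged into one kernel-verified Lean document; each statement's English description precedes it below -/
import Mathlib

section
/- Let r be a positive integer and x_k = π/(2r) + (k-1)π/r for k = 1,…,r. Define the r×r matrix A with entries A_{k,j} = sin(j·x_k). Then AᵀA is the diagonal matrix with diagonal entries (r/2, r/2, …, r/2, r), i.e., the (j,j) entry equals r/2 for j = 1,…,r-1 and equals r for j = r, and all off-diagonal entries of AᵀA are zero. -/
open Real Finset Matrix

lemma cos_sum_zero (r : ℕ) (hr : 0 < r) (m : ℤ) (hm : ¬ (2 * (r:ℤ)) ∣ m) :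
    ∑ i ∈ Finset.range r, Real.cos ((m:ℝ) * ((2*i+1) * π / (2*r))) = 0 := by
  have hrR : (r:ℝ) ≠ 0 := Nat.cast_ne_zero.2 hr.ne'
  set c : ℝ := (m:ℝ) * π / (2*r) with hc
  have hsc : Real.sin c ≠ 0 := by
    intro h
    rcases Real.sin_eq_zero_iff.1 h with ⟨n, hn⟩
    apply hm
    refine ⟨n, ?_⟩
    have hn' : ((n:ℝ)*(2*r)) * π = (m:ℝ) * π := by
      rw [hc] at hn; field_simp at hn; linear_combination π * hn
    have : (m:ℝ) = 2 * r * n := by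
      have := mul_right_cancel₀ Real.pi_ne_zero hn'
      linarith
    exact_mod_cast this
  set f : ℕ → ℝ := fun i => Real.sin (2*i*c) with hf
  have tel : ∀ i : ℕ, Real.cos ((m:ℝ) * ((2*i+1) * π / (2*r))) * (2 * Real.sin c)
      = f (i+1) - f i := by
    intro i
    rw [hf]
    simp only []
    push_cast
    rw [Real.sin_sub_sin]
    have h1 : (2*((i:ℝ)+1)*c - 2*i*c)/2 = c := by ring
    have h2 : (2*((i:ℝ)+1)*c + 2*i*c)/2 = (m:ℝ) * ((2*i+1) * π / (2*r)) := by
      rw [hc]; ring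
    rw [h1, h2]; ring
  have hsum : (∑ i ∈ Finset.range r, Real.cos ((m:ℝ) * ((2*i+1) * π / (2*r)))) * (2 * Real.sin c)
      = f r - f 0 := by
    rw [Finset.sum_mul, Finset.sum_congr rfl fun i _ => tel i]
    exact Finset.sum_range_sub f r
  have h2rc : f r = 0 := by
    rw [hf]
    have : 2*(r:ℝ)*c = (m:ℝ) * π := by rw [hc]; field_simp
    simp only []
    rw [this, Real.sin_int_mul_pi]
  rw [h2rc, hf] at hsum
  simp at hsum
  rcases hsum with h | h
  · exact h
  · exact absurd h hsc

lemma not_dvd_of_bounds (r : ℕ) (m : ℤ) (h1 : m ≠ 0) (h2 : |m| < 2 * r) :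
    ¬ (2 * (r:ℤ)) ∣ m := by
  intro hd
  exact h1 (Int.eq_zero_of_abs_lt_dvd hd h2)

theorem gram_matrix_diag (r : ℕ) (hr : 0 < r)
    (A : Matrix (Fin r) (Fin r) ℝ)
    (hA : ∀ i k : Fin r,
      A i k = Real.sin ((((k : ℕ) : ℝ) + 1) * (π / (2 * r) + (i : ℕ) * (π / r)))) :
    Aᵀ * A = Matrix.diagonal (fun j : Fin r =>
      if (j : ℕ) = r - 1 then (r : ℝ) else (r : ℝ) / 2) := by
  have hrR : (r:ℝ) ≠ 0 := Nat.cast_ne_zero.2 hr.ne'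
  ext j k
  rw [Matrix.mul_apply]
  simp only [Matrix.transpose_apply]
  have hentry : ∀ i : Fin r, A i j * A i k =
      (Real.cos ((((j:ℕ):ℝ) - ((k:ℕ):ℝ)) * ((2*(i:ℕ)+1) * π / (2*r)))
        - Real.cos ((((j:ℕ):ℝ) + ((k:ℕ):ℝ) + 2) * ((2*(i:ℕ)+1) * π / (2*r)))) / 2 := by
    intro i
    rw [hA, hA]
    have key : ∀ x y : ℝ, Real.sin x * Real.sin y = (Real.cos (x-y) - Real.cos (x+y))/2 := by
      intro x y; rw [Real.cos_sub, Real.cos_add]; ring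
    rw [key]
    congr 2
    · ring
    · ring
  rw [Finset.sum_congr rfl fun i _ => hentry i]
  rw [Fin.sum_univ_eq_sum_range (fun i => (Real.cos ((((j:ℕ):ℝ) - ((k:ℕ):ℝ)) * ((2*i+1) * π / (2*r)))
        - Real.cos ((((j:ℕ):ℝ) + ((k:ℕ):ℝ) + 2) * ((2*i+1) * π / (2*r)))) / 2)]
  rw [← Finset.sum_div, Finset.sum_sub_distrib]
  have hj : (j:ℕ) < r := j.isLt
  have hk : (k:ℕ) < r := k.isLt
  by_cases hjk : j = k
  · subst hjk
    have hd0 : ∑ i ∈ Finset.range r, Real.cos ((((j:ℕ):ℝ) - ((j:ℕ):ℝ)) * ((2*i+1) * π / (2*r))) = r := by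
      simp
    rw [hd0]
    rw [Matrix.diagonal_apply_eq]
    by_cases hlast : (j:ℕ) = r - 1
    · rw [if_pos hlast]
      have hcast : (((j:ℕ):ℝ) + ((j:ℕ):ℝ) + 2) = 2 * r := by
        have : (j:ℕ) + 1 = r := by omega
        have : ((j:ℕ):ℝ) + 1 = r := by exact_mod_cast this
        linarith
      rw [hcast]
      have hterm : ∀ i ∈ Finset.range r, Real.cos (2*(r:ℝ) * ((2*i+1) * π / (2*r))) = -1 := by
        intro i _
        have harg : 2*(r:ℝ) * ((2*i+1) * π / (2*r)) = (i:ℝ) * (2*π) + π := by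
          field_simp
          try ring
        rw [harg, Real.cos_add_pi, Real.cos_nat_mul_two_pi]
      rw [Finset.sum_congr rfl hterm]
      simp
    · rw [if_neg hlast]
      have hs : ∑ i ∈ Finset.range r, Real.cos ((((j:ℕ):ℝ) + ((j:ℕ):ℝ) + 2) * ((2*i+1) * π / (2*r))) = 0 := by
        have := cos_sum_zero r hr (2*(j:ℤ)+2) (by
          apply not_dvd_of_bounds
          · omega
          · have : (j:ℕ) + 1 < r := by omega
            rw [abs_of_pos (by omega)]
            omega)
        convert this using 2 with i
        push_cast
        ring
      rw [hs]
      ring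
  · have hjk' : (j:ℕ) ≠ (k:ℕ) := fun h => hjk (Fin.ext h)
    rw [Matrix.diagonal_apply_ne _ hjk]
    have hd : ∑ i ∈ Finset.range r, Real.cos ((((j:ℕ):ℝ) - ((k:ℕ):ℝ)) * ((2*i+1) * π / (2*r))) = 0 := by
      have := cos_sum_zero r hr ((j:ℤ) - (k:ℤ)) (by
        apply not_dvd_of_bounds
        · omega
        · rw [abs_sub_lt_iff]; omega)
      convert this using 2 with i
      push_cast
      ring
    have hs : ∑ i ∈ Finset.range r, Real.cos ((((j:ℕ):ℝ) + ((k:ℕ):ℝ) + 2) * ((2*i+1) * π / (2*r))) = 0 := by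
      have := cos_sum_zero r hr ((j:ℤ) + (k:ℤ) + 2) (by
        apply not_dvd_of_bounds
        · omega
        · rw [abs_of_pos (by omega)]
          omega)
      convert this using 2 with i
      push_cast
      ring
    rw [hd, hs]
    ring
end

section
/- Let r be a positive integer and x_k = kπ/r for k = 0,1,…,r. Define the (r+1)×(r+1) matrix A with entries A_{i,j} = cos(j·x_i) for i,j = 0,…,r. Then the entries of E := AᵀA are: E_{ii} = r+1 if i = 0 or i = r; E_{ii} = (r+2)/2 if 0 < i < r; E_{ij} = 1 if i ≠ j and i+j is even; and E_{ij} = 0 if i+j is odd. -/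
open Real Finset Matrix

lemma sum_cos_int (r : ℕ) (hr : 0 < r) (m : ℤ) :
    ∑ k ∈ Finset.range (r + 1), Real.cos ((m : ℝ) * k * π / r) =
      if (2 * (r : ℤ)) ∣ m then (r : ℝ) + 1 else if Even m then 1 else 0 := by
  have hr' : (r : ℝ) ≠ 0 := Nat.cast_ne_zero.mpr hr.ne'
  have hrc : (r : ℂ) ≠ 0 := Nat.cast_ne_zero.mpr hr.ne'
  set θ : ℝ := (m : ℝ) * π / r with hθ
  set ω : ℂ := Complex.exp (θ * Complex.I) with hω
  have hcos : ∀ k : ℕ, Real.cos ((m : ℝ) * k * π / r) = (ω ^ k).re := by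
    intro k
    rw [hω, ← Complex.exp_nat_mul]
    have : (k : ℂ) * ((θ : ℝ) * Complex.I) = ((k * θ : ℝ) : ℂ) * Complex.I := by
      push_cast; ring
    rw [this, Complex.exp_ofReal_mul_I_re]
    congr 1
    rw [hθ]; ring
  have hω1 : ω = 1 ↔ (2 * (r : ℤ)) ∣ m := by
    rw [hω, Complex.exp_eq_one_iff]
    constructor
    · rintro ⟨n, hn⟩
      refine ⟨n, ?_⟩
      have hI : (θ : ℂ) = (n : ℂ) * (2 * π) :=
        mul_right_cancel₀ Complex.I_ne_zero (by linear_combination hn)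
      have hre : θ = n * (2 * π) := by exact_mod_cast hI
      have : (m : ℝ) = ((2 * r * n : ℤ) : ℝ) := by
        push_cast
        rw [hθ] at hre; field_simp at hre
        nlinarith [Real.pi_pos, hre]
      exact_mod_cast this
    · rintro ⟨n, hn⟩
      refine ⟨n, ?_⟩
      have : θ = n * (2 * π) := by
        rw [hθ, hn]; push_cast; field_simp
      rw [this]; push_cast; ring
  simp only [hcos, ← Complex.re_sum]
  by_cases hd : (2 * (r : ℤ)) ∣ m
  · simp [hω1.mpr hd, hd]
  · have hne : ω ≠ 1 := fun h => hd (hω1.mp h)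
    rw [geom_sum_eq hne]
    have hωr : ω ^ r = (-1 : ℂ) ^ m := by
      rw [hω, ← Complex.exp_nat_mul, ← Complex.exp_pi_mul_I, ← Complex.exp_int_mul]
      congr 1
      have : (θ : ℂ) = (m : ℂ) * π / r := by rw [hθ]; push_cast; ring
      rw [this]
      field_simp [hrc]
    rw [if_neg hd]
    by_cases hev : Even m
    · have h1 : (-1 : ℂ) ^ m = 1 := hev.neg_one_zpow
      rw [if_pos hev]
      rw [pow_succ, hωr, h1, one_mul]
      rw [div_self (sub_ne_zero.mpr hne)]
      simp
    · have h1 : (-1 : ℂ) ^ m = -1 := (Int.not_even_iff_odd.mp hev).neg_one_zpow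
      rw [if_neg hev]
      rw [pow_succ, hωr, h1]
      set z : ℂ := (-1 * ω - 1) / (ω - 1) with hz
      have hω0 : ω ≠ 0 := Complex.exp_ne_zero _
      have hconj : (starRingEnd ℂ) ω = ω⁻¹ := by
        rw [hω, ← Complex.exp_conj, ← Complex.exp_neg]
        congr 1
        simp [Complex.conj_ofReal]
      have hinv1 : ω⁻¹ ≠ 1 := by
        intro h
        apply hne
        rw [← inv_inv ω, h, inv_one]
      have hc : (starRingEnd ℂ) z = -z := by
        rw [hz]
        simp only [map_div₀, map_sub, _root_.map_mul, _root_.map_neg, _root_.map_one, hconj]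
        rw [← neg_div, div_eq_div_iff (sub_ne_zero.mpr hinv1) (sub_ne_zero.mpr hne)]
        field_simp
        ring
      have hzero : z + (starRingEnd ℂ) z = 0 := by rw [hc]; ring
      rw [Complex.add_conj] at hzero
      have h2 : 2 * z.re = 0 := by exact_mod_cast hzero
      have : z.re = 0 := by linarith
      exact this

theorem gram_matrix_even (r : ℕ) (hr : 0 < r)
    (A : Matrix (Fin (r + 1)) (Fin (r + 1)) ℝ)
    (hA : ∀ i k : Fin (r + 1),
      A i k = Real.cos (((k : ℕ) : ℝ) * (((i : ℕ) : ℝ) * π / r))) :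
    ∀ i j : Fin (r + 1), (Aᵀ * A) i j =
      if i = j then
        (if (i : ℕ) = 0 ∨ (i : ℕ) = r then (r : ℝ) + 1 else ((r : ℝ) + 2) / 2)
      else
        (if Even ((i : ℕ) + (j : ℕ)) then 1 else 0) := by
  intro i j
  set a : ℕ := (i : ℕ) with ha
  set b : ℕ := (j : ℕ) with hb
  have haa : a ≤ r := Nat.lt_succ_iff.mp i.isLt
  have hbb : b ≤ r := Nat.lt_succ_iff.mp j.isLt
  have key : (Aᵀ * A) i j =
      ((∑ k ∈ Finset.range (r + 1), Real.cos (((a + b : ℤ) : ℝ) * k * π / r)) +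
       (∑ k ∈ Finset.range (r + 1), Real.cos (((a - b : ℤ) : ℝ) * k * π / r))) / 2 := by
    rw [Matrix.mul_apply]
    simp only [Matrix.transpose_apply]
    rw [← Fin.sum_univ_eq_sum_range
      (fun k => Real.cos (((a + b : ℤ) : ℝ) * k * π / r)),
      ← Fin.sum_univ_eq_sum_range
      (fun k => Real.cos (((a - b : ℤ) : ℝ) * k * π / r)),
      ← Finset.sum_add_distrib, Finset.sum_div]
    refine Finset.sum_congr rfl fun k _ => ?_
    rw [hA k i, hA k j]
    have e1 : ((a + b : ℤ) : ℝ) * k * π / r =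
        (a : ℝ) * ((k : ℕ) * π / r) + (b : ℝ) * ((k : ℕ) * π / r) := by push_cast; ring
    have e2 : ((a - b : ℤ) : ℝ) * k * π / r =
        (a : ℝ) * ((k : ℕ) * π / r) - (b : ℝ) * ((k : ℕ) * π / r) := by push_cast; ring
    rw [e1, e2, Real.cos_add, Real.cos_sub]
    ring
  rw [key, sum_cos_int r hr, sum_cos_int r hr]
  have hrz : (0 : ℤ) < r := by exact_mod_cast hr
  have hd2 : (2 * (r : ℤ)) ∣ ((a : ℤ) - b) ↔ a = b := by
    constructor
    · intro h
      have h0 : (a : ℤ) - b = 0 := Int.eq_zero_of_abs_lt_dvd h (by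
        rw [abs_sub_lt_iff]; omega)
      omega
    · intro h; rw [h]; simp
  have hd1 : (2 * (r : ℤ)) ∣ ((a : ℤ) + b) ↔ ((a = 0 ∧ b = 0) ∨ (a = r ∧ b = r)) := by
    constructor
    · intro h
      rcases h with ⟨t, ht⟩
      have h0 : t = 0 ∨ t = 1 := by
        rcases lt_trichotomy t 0 with h' | h' | h'
        · exfalso; nlinarith
        · left; exact h'
        · rcases eq_or_lt_of_le (Int.add_one_le_iff.mpr h') with h'' | h''
          · right; exact h''.symm
          · exfalso; nlinarith
      rcases h0 with h0 | h0 <;> rw [h0] at ht <;> omega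
    · rintro (⟨h1, h2⟩ | ⟨h1, h2⟩)
      · exact ⟨0, by omega⟩
      · exact ⟨1, by omega⟩
  have hij : i = j ↔ a = b := by
    rw [Fin.ext_iff]
  have hpar : Even ((a : ℤ) - b) ↔ Even ((a : ℤ) + b) := by
    rw [Int.even_sub, Int.even_add]
  have hparn : Even ((a : ℤ) + b) ↔ Even (a + b) := by
    rw [show ((a : ℤ) + b) = ((a + b : ℕ) : ℤ) by push_cast; ring, Int.even_coe_nat]
  by_cases heq : a = b
  · rw [if_pos (hij.mpr heq), if_pos (hd2.mpr heq)]
    by_cases h0 : a = 0 ∨ a = r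
    · rw [if_pos h0, if_pos (hd1.mpr (by omega))]
      ring
    · rw [if_neg h0, if_neg (by rw [hd1]; omega)]
      rw [if_pos (by rw [hparn, heq]; exact Even.add_self b)]
      ring
  · rw [if_neg (fun h => heq (hij.mp h)), if_neg (fun h => heq (hd2.mp h)),
      if_neg (by rw [hd1]; omega)]
    by_cases hev : Even (a + b)
    · rw [if_pos (hparn.mpr hev), if_pos (hpar.mpr (hparn.mpr hev)), if_pos hev]
      ring
    · rw [if_neg (fun h => hev (hparn.mp h)),
        if_neg (fun h => hev (hparn.mp (hpar.mp h))), if_neg hev]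
      ring
end

section
/- Let r ≥ 1 and x_1,…,x_r be real numbers. The determinant of the r×r matrix A with entries A_{i,k} = sin(k·x_i) (k = 1,…,r) equals 2^{r(r-1)/2} · (∏_{i=1}^r sin x_i) · ∏_{1 ≤ i < j ≤ r} (cos x_j - cos x_i). -/
open Real Finset Polynomial

lemma U_deg_lead : ∀ n : ℕ, (Polynomial.Chebyshev.U ℝ n).natDegree = n ∧
    (Polynomial.Chebyshev.U ℝ n).leadingCoeff = 2 ^ n := by
  intro n
  induction n using Nat.strong_induction_on with
  | _ n ih =>
    match n with
    | 0 => simp [Polynomial.Chebyshev.U_zero]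
    | 1 =>
      refine ⟨by simp [Polynomial.Chebyshev.U_one], ?_⟩
      simp [Polynomial.Chebyshev.U_one, Polynomial.leadingCoeff]
    | (n+2) =>
      obtain ⟨hd1, hl1⟩ := ih (n+1) (by omega)
      obtain ⟨hd0, hl0⟩ := ih n (by omega)
      have h1ne : Polynomial.Chebyshev.U ℝ ((n:ℕ)+1 : ℕ) ≠ 0 := by
        intro h
        rw [h, Polynomial.leadingCoeff_zero] at hl1
        exact absurd hl1.symm (by positivity)
      have hXU : (2 * X * Polynomial.Chebyshev.U ℝ (((n:ℕ)+1 : ℕ)) : ℝ[X]) =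
          C 2 * (X * Polynomial.Chebyshev.U ℝ (((n:ℕ)+1 : ℕ))) := by
        have hC : (C 2 : ℝ[X]) = 2 := by rw [show (2:ℝ) = ((2:ℕ):ℝ) by norm_num, Polynomial.C_eq_natCast]; norm_num
        rw [hC]; ring
      have hXUne : (X * Polynomial.Chebyshev.U ℝ (((n:ℕ)+1 : ℕ)) : ℝ[X]) ≠ 0 :=
        mul_ne_zero Polynomial.X_ne_zero h1ne
      have hqd : (2 * X * Polynomial.Chebyshev.U ℝ (((n:ℕ)+1 : ℕ)) : ℝ[X]).natDegree = n + 2 := by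
        rw [hXU, Polynomial.natDegree_C_mul (two_ne_zero),
          Polynomial.natDegree_mul Polynomial.X_ne_zero h1ne, Polynomial.natDegree_X, hd1]
        omega
      have hql : (2 * X * Polynomial.Chebyshev.U ℝ (((n:ℕ)+1 : ℕ)) : ℝ[X]).leadingCoeff
          = 2 ^ (n + 2) := by
        rw [hXU, Polynomial.leadingCoeff_mul, Polynomial.leadingCoeff_mul,
          Polynomial.leadingCoeff_X, Polynomial.leadingCoeff_C, hl1]
        ring
      have hdeglt : (Polynomial.Chebyshev.U ℝ (n:ℕ)).degree <
          (2 * X * Polynomial.Chebyshev.U ℝ (((n:ℕ)+1 : ℕ)) : ℝ[X]).degree := by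
        apply Polynomial.degree_lt_degree
        rw [hqd, hd0]; omega
      have hU : (Polynomial.Chebyshev.U ℝ (((n:ℕ)+2 : ℕ)) : ℝ[X]) =
          2 * X * Polynomial.Chebyshev.U ℝ (((n:ℕ)+1 : ℕ)) - Polynomial.Chebyshev.U ℝ (n:ℕ) := by
        have := Polynomial.Chebyshev.U_add_two ℝ (n : ℤ)
        push_cast
        push_cast at this
        exact this
      constructor
      · rw [hU, Polynomial.natDegree_sub_eq_left_of_natDegree_lt, hqd]
        rw [hqd, hd0]; omega
      · rw [hU, Polynomial.leadingCoeff_sub_of_degree_lt hdeglt, hql]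

theorem det_sin_matrix (r : ℕ) (hr : 0 < r) (x : Fin r → ℝ)
    (A : Matrix (Fin r) (Fin r) ℝ)
    (hA : ∀ i k : Fin r, A i k = Real.sin ((((k : ℕ) : ℝ) + 1) * x i)) :
    A.det = 2 ^ (r * (r - 1) / 2) * (∏ i, Real.sin (x i)) *
      ∏ i, ∏ j ∈ Finset.univ.filter (fun j => i < j),
        (Real.cos (x j) - Real.cos (x i)) := by
  set y : Fin r → ℝ := fun i => Real.cos (x i) with hy
  set p : Fin r → ℝ[X] := fun k => C (((2:ℝ) ^ (k:ℕ))⁻¹) * Polynomial.Chebyshev.U ℝ (k:ℕ)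
    with hp
  have h2k : ∀ k : Fin r, ((2:ℝ) ^ (k:ℕ)) ≠ 0 := fun k => by positivity
  have hdeg : ∀ k : Fin r, (p k).natDegree = (k:ℕ) := fun k => by
    rw [hp, Polynomial.natDegree_C_mul (inv_ne_zero (h2k k)), (U_deg_lead k).1]
  have hmonic : ∀ k : Fin r, (p k).Monic := fun k => by
    unfold Polynomial.Monic
    rw [hp, Polynomial.leadingCoeff_mul, Polynomial.leadingCoeff_C, (U_deg_lead k).2]
    field_simp
  set W : Matrix (Fin r) (Fin r) ℝ := Matrix.of (fun i k => (p k).eval (y i)) with hW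
  set D : Matrix (Fin r) (Fin r) ℝ := Matrix.diagonal (fun k : Fin r => (2:ℝ) ^ (k:ℕ)) with hD
  have hAeq : A = Matrix.diagonal (fun i => Real.sin (x i)) * (W * D) := by
    ext i k
    rw [Matrix.diagonal_mul, Matrix.mul_diagonal, hA]
    simp only [hW, Matrix.of_apply, hp, Polynomial.eval_mul, Polynomial.eval_C, hy]
    have hU := Polynomial.Chebyshev.U_real_cos (x i) (k:ℕ)
    push_cast at hU
    have hc : ((2:ℝ) ^ (k:ℕ))⁻¹ * eval (Real.cos (x i)) (Polynomial.Chebyshev.U ℝ (k:ℕ)) *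
        2 ^ (k:ℕ) = eval (Real.cos (x i)) (Polynomial.Chebyshev.U ℝ (k:ℕ)) := by
      field_simp
    rw [hc, ← hU]
    ring
  have hdetW : W.det = (Matrix.vandermonde y).det :=
    (Matrix.det_eval_matrixOfPolynomials_eq_det_vandermonde y p hdeg hmonic).symm
  have hdetD : D.det = 2 ^ (r * (r - 1) / 2) := by
    rw [hD, Matrix.det_diagonal, Finset.prod_pow_eq_pow_sum]
    congr 1
    rw [Fin.sum_univ_eq_sum_range (fun i => i) r, Finset.sum_range_id]
  have hfilt : ∀ i : Fin r, Finset.univ.filter (fun j => i < j) = Finset.Ioi i := by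
    intro i; ext j; simp
  rw [hAeq, Matrix.det_mul, Matrix.det_mul, Matrix.det_diagonal, hdetW, hdetD,
    Matrix.det_vandermonde]
  simp only [hfilt, hy]
  ring
end

section
/- Let r ≥ 1 and x_0,…,x_r be real numbers. The determinant of the (r+1)×(r+1) matrix A with entries A_{i,k} = cos(k·x_i) (i,k = 0,…,r, with the convention cos(0·x_i) = 1) equals 2^{r(r-1)/2} · ∏_{0 ≤ i < j ≤ r} (cos x_j - cos x_i). -/
open Real Finset

open Polynomial Polynomial.Chebyshev in
lemma cheb_deg_coeff (n : ℕ) : (T ℝ (n : ℤ)).natDegree = n ∧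
    (T ℝ (n : ℤ)).coeff n = 2 ^ (n - 1) := by
  induction n using Nat.strong_induction_on with
  | _ n ih =>
    match n with
    | 0 => simp [T_zero]
    | 1 => simp [T_one]
    | (k + 2) =>
      obtain ⟨hd1, hc1⟩ := ih (k + 1) (by omega)
      obtain ⟨hd0, hc0⟩ := ih k (by omega)
      have hrec : T ℝ ((k + 2 : ℕ) : ℤ) = 2 * X * T ℝ ((k + 1 : ℕ) : ℤ) - T ℝ (k : ℤ) := by
        push_cast
        exact T_add_two ℝ (k : ℤ)
      have h2 : (2 : ℝ[X]) * X * T ℝ ((k + 1 : ℕ) : ℤ) = C 2 * (X * T ℝ ((k + 1 : ℕ) : ℤ)) := by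
        rw [← mul_assoc]
        norm_num
        left
        norm_cast
      have hcoeff : (T ℝ ((k + 2 : ℕ) : ℤ)).coeff (k + 2) = 2 ^ (k + 1) := by
        rw [hrec, coeff_sub, h2, coeff_C_mul, show k + 2 = (k + 1) + 1 from rfl, coeff_X_mul,
          hc1, coeff_eq_zero_of_natDegree_lt (by omega : (T ℝ (k:ℤ)).natDegree < k + 1 + 1)]
        simp [pow_succ]
        ring
      have hle : (T ℝ ((k + 2 : ℕ) : ℤ)).natDegree ≤ k + 2 := by
        rw [hrec]
        refine le_trans (natDegree_sub_le _ _) ?_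
        simp only [sup_le_iff, max_le_iff]
        constructor
        · refine le_trans (natDegree_mul_le) ?_
          have : ((2 : ℝ[X]) * X).natDegree ≤ 1 := by
            refine le_trans (natDegree_mul_le) ?_
            simp
          omega
        · omega
      refine ⟨?_, by simpa using hcoeff⟩
      exact Polynomial.natDegree_eq_of_le_of_coeff_ne_zero hle (by rw [hcoeff]; positivity)

theorem det_cos_matrix (r : ℕ) (hr : 0 < r) (x : Fin (r + 1) → ℝ)
    (A : Matrix (Fin (r + 1)) (Fin (r + 1)) ℝ)
    (hA : ∀ i k : Fin (r + 1), A i k = Real.cos (((k : ℕ) : ℝ) * x i)) :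
    A.det = 2 ^ (r * (r - 1) / 2) *
      ∏ i, ∏ j ∈ Finset.univ.filter (fun j => i < j),
        (Real.cos (x j) - Real.cos (x i)) := by
  classical
  set c : Fin (r + 1) → ℝ := fun i => Real.cos (x i) with hc
  set p : Fin (r + 1) → Polynomial ℝ :=
    fun k => Polynomial.C ((2 : ℝ) ^ ((k : ℕ) - 1))⁻¹ * Polynomial.Chebyshev.T ℝ ((k : ℕ) : ℤ)
    with hp
  have hne : ∀ k : Fin (r + 1), ((2 : ℝ) ^ ((k : ℕ) - 1))⁻¹ ≠ 0 := by
    intro k; positivity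
  have h_deg : ∀ k : Fin (r + 1), (p k).natDegree = (k : ℕ) := by
    intro k
    rw [hp]
    rw [Polynomial.natDegree_C_mul (hne k), (cheb_deg_coeff (k : ℕ)).1]
  have h_monic : ∀ k : Fin (r + 1), (p k).Monic := by
    intro k
    unfold Polynomial.Monic Polynomial.leadingCoeff
    rw [h_deg k, hp]
    simp only [Polynomial.coeff_C_mul]
    rw [(cheb_deg_coeff (k : ℕ)).2]
    rw [inv_mul_cancel₀ (by positivity)]
  have heval : ∀ i k : Fin (r + 1),
      (p k).eval (c i) = ((2 : ℝ) ^ ((k : ℕ) - 1))⁻¹ * A i k := by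
    intro i k
    rw [hp, hA]
    simp only [Polynomial.eval_mul, Polynomial.eval_C, hc]
    rw [Polynomial.Chebyshev.T_real_cos]
    push_cast
    ring
  have key := Matrix.det_eval_matrixOfPolynomials_eq_det_vandermonde c p h_deg h_monic
  have hM : (Matrix.of fun i k => (p k).eval (c i)) =
      (Matrix.of fun (i k : Fin (r + 1)) => ((2 : ℝ) ^ ((k : ℕ) - 1))⁻¹ * A i k) := by
    ext i k; exact heval i k
  rw [hM, Matrix.det_mul_row, Matrix.det_vandermonde] at key
  have hsum : ∑ k : Fin (r + 1), ((k : ℕ) - 1) = r * (r - 1) / 2 := by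
    rw [Fin.sum_univ_eq_sum_range (fun i => i - 1), Finset.sum_range_succ']
    simp only [Nat.add_sub_cancel, Nat.zero_sub, add_zero]
    rw [Finset.sum_range_id]
  have hprod : (∏ k : Fin (r + 1), ((2 : ℝ) ^ ((k : ℕ) - 1))⁻¹)
      = ((2 : ℝ) ^ (r * (r - 1) / 2))⁻¹ := by
    rw [Finset.prod_inv_distrib]
    congr 1
    rw [Finset.prod_pow_eq_pow_sum, hsum]
  rw [hprod] at key
  have hIoi : ∀ i : Fin (r + 1),
      (Finset.univ.filter (fun j => i < j)) = Finset.Ioi i := by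
    intro i; ext j; simp
  have h2pos : ((2 : ℝ) ^ (r * (r - 1) / 2)) ≠ 0 := by positivity
  field_simp at key
  simp only [hIoi, hc] at key ⊢
  linarith [key]
end

section
/- Let r ≥ 1 and x_1,…,x_r ∈ ℝ. The matrix A with entries A_{i,k} = sin(k·x_i) (i,k = 1,…,r) is invertible if and only if sin x_i ≠ 0 for all i and the values cos x_1,…,cos x_r are pairwise distinct. -/
open Real Finset

open Polynomial in
lemma U_deg_coeff (k : ℕ) :
    (Polynomial.Chebyshev.U ℝ k).natDegree ≤ k ∧
      (Polynomial.Chebyshev.U ℝ k).coeff k = 2 ^ k := by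
  induction k using Nat.strong_induction_on with
  | _ k ih =>
    match k with
    | 0 => simp [Polynomial.Chebyshev.U_zero]
    | 1 =>
      constructor
      · simpa [Polynomial.Chebyshev.U_one] using Polynomial.natDegree_linear_le
      · simp [Polynomial.Chebyshev.U_one, Polynomial.coeff_X, two_mul]
        norm_num
    | (k + 2) =>
      obtain ⟨h1d, h1c⟩ := ih (k + 1) (by omega)
      obtain ⟨h0d, h0c⟩ := ih k (by omega)
      have heq : Polynomial.Chebyshev.U ℝ ((k + 2 : ℕ)) =
          2 * X * Polynomial.Chebyshev.U ℝ ((k + 1 : ℕ)) - Polynomial.Chebyshev.U ℝ (k : ℕ) := by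
        push_cast
        exact Polynomial.Chebyshev.U_add_two ℝ k
      constructor
      · rw [heq]
        refine le_trans (Polynomial.natDegree_sub_le _ _) ?_
        simp only [sup_le_iff, max_le_iff]
        constructor
        · refine le_trans (Polynomial.natDegree_mul_le) ?_
          have : (2 * X : ℝ[X]).natDegree ≤ 1 := by
            simpa using Polynomial.natDegree_linear_le (a := (2:ℝ)) (b := 0)
          omega
        · omega
      · rw [heq]
        have hz : (Polynomial.Chebyshev.U ℝ k).coeff (k + 2) = 0 :=
          Polynomial.coeff_eq_zero_of_natDegree_lt (by omega)
        rw [Polynomial.coeff_sub, hz, sub_zero]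
        have : (2 * X * Polynomial.Chebyshev.U ℝ ((k + 1 : ℕ))) =
            2 * (X * Polynomial.Chebyshev.U ℝ ((k + 1 : ℕ))) := by ring
        rw [this, Polynomial.coeff_ofNat_mul, Polynomial.coeff_X_mul, h1c]
        ring

theorem sin_matrix_invertible_iff (r : ℕ) (hr : 0 < r) (x : Fin r → ℝ)
    (A : Matrix (Fin r) (Fin r) ℝ)
    (hA : ∀ i k : Fin r, A i k = Real.sin ((((k : ℕ) : ℝ) + 1) * x i)) :
    IsUnit A ↔
      ((∀ i, Real.sin (x i) ≠ 0) ∧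
        ∀ i j, i ≠ j → Real.cos (x i) ≠ Real.cos (x j)) := by
  classical
  -- the monic normalizations of Chebyshev U
  set p : Fin r → Polynomial ℝ :=
    fun j => Polynomial.C (((2:ℝ) ^ (j:ℕ))⁻¹) * Polynomial.Chebyshev.U ℝ (j:ℕ) with hp
  have hUd := fun k => (U_deg_coeff k).1
  have hUc := fun k => (U_deg_coeff k).2
  have hpdeg : ∀ j : Fin r, (p j).natDegree = j := by
    intro j
    have hle : (p j).natDegree ≤ j :=
      le_trans (Polynomial.natDegree_mul_le)
        (by simpa using hUd (j:ℕ))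
    have hcoeff : (p j).coeff (j:ℕ) = 1 := by
      rw [hp]
      simp only [Polynomial.coeff_C_mul, hUc]
      field_simp
    exact le_antisymm hle (Polynomial.le_natDegree_of_ne_zero (by rw [hcoeff]; norm_num))
  have hpmonic : ∀ j : Fin r, (p j).Monic := by
    intro j
    unfold Polynomial.Monic Polynomial.leadingCoeff
    rw [hpdeg j, hp]
    simp only [Polynomial.coeff_C_mul, hUc]
    field_simp
  -- decompose A
  have hAfact : A = Matrix.diagonal (fun i => Real.sin (x i)) *
      (Matrix.of fun i j => (p j).eval (Real.cos (x i))) *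
      Matrix.diagonal (fun j : Fin r => (2:ℝ) ^ (j:ℕ)) := by
    ext i k
    simp only [Matrix.mul_diagonal, Matrix.diagonal_mul, Matrix.of_apply]
    rw [hA i k, hp]
    have := Polynomial.Chebyshev.U_real_cos (x i) (k:ℕ)
    push_cast at this
    simp only [Polynomial.eval_mul, Polynomial.eval_C]
    rw [← this, mul_comm ((2:ℝ)^(k:ℕ))⁻¹, mul_assoc, mul_assoc,
      inv_mul_cancel₀ (by positivity : ((2:ℝ)^(k:ℕ)) ≠ 0), mul_one, mul_comm]
  rw [Matrix.isUnit_iff_isUnit_det, isUnit_iff_ne_zero, hAfact]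
  rw [Matrix.det_mul, Matrix.det_mul, Matrix.det_diagonal, Matrix.det_diagonal]
  have hvdm : (Matrix.of fun i j => (p j).eval (Real.cos (x i))).det =
      (Matrix.vandermonde fun i => Real.cos (x i)).det :=
    (Matrix.det_eval_matrixOfPolynomials_eq_det_vandermonde _ p hpdeg hpmonic).symm
  rw [hvdm]
  simp only [mul_ne_zero_iff]
  constructor
  · rintro ⟨⟨hs, hv⟩, -⟩
    refine ⟨fun i => ?_, fun i j hij => ?_⟩
    · intro h
      exact hs (Finset.prod_eq_zero (Finset.mem_univ i) h)
    · intro h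
      exact hv (Matrix.det_vandermonde_eq_zero_iff.mpr ⟨i, j, h, hij⟩)
  · rintro ⟨hs, hd⟩
    refine ⟨⟨Finset.prod_ne_zero_iff.mpr fun i _ => hs i, ?_⟩,
      Finset.prod_ne_zero_iff.mpr fun j _ => by positivity⟩
    exact Matrix.det_vandermonde_ne_zero_iff.mpr fun i j h => by
      by_contra hne; exact hd i j hne h
end

section
/- Let r ≥ 1 and x_0,…,x_r ∈ ℝ. The matrix A with entries A_{i,k} = cos(k·x_i) (i,k = 0,…,r) is invertible if and only if the values cos x_0, cos x_1,…,cos x_r are pairwise distinct. -/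
open Real Finset

open Polynomial in
lemma chebyT_deg_lead : ∀ n : ℕ,
    (Polynomial.Chebyshev.T ℝ n).natDegree = n ∧
      (Polynomial.Chebyshev.T ℝ n).leadingCoeff = 2 ^ (n - 1) := by
  intro n
  induction n using Nat.strong_induction_on with
  | _ n ih =>
    match n with
    | 0 => simp [Polynomial.Chebyshev.T_zero]
    | 1 => simp [Polynomial.Chebyshev.T_one]
    | (m + 2) =>
      obtain ⟨hd1, hl1⟩ := ih (m + 1) (by omega)
      obtain ⟨hd0, hl0⟩ := ih m (by omega)
      have key : Polynomial.Chebyshev.T ℝ (m + 2 : ℕ) =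
          2 * X * Polynomial.Chebyshev.T ℝ (m + 1 : ℕ) - Polynomial.Chebyshev.T ℝ (m : ℕ) := by
        have := Polynomial.Chebyshev.T_add_two ℝ (m : ℤ)
        push_cast
        push_cast at this
        convert this using 2 <;> ring_nf
      have hT1ne : Polynomial.Chebyshev.T ℝ (m + 1 : ℕ) ≠ 0 := by
        intro h; rw [h] at hd1; simp at hd1
      have h2 : (2 : ℝ[X]) = Polynomial.C 2 := (map_ofNat Polynomial.C 2).symm
      have h2X : (2 * X : ℝ[X]) ≠ 0 := by
        rw [h2]
        exact mul_ne_zero (Polynomial.C_ne_zero.mpr two_ne_zero) Polynomial.X_ne_zero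
      have hdmul : (2 * X * Polynomial.Chebyshev.T ℝ (m + 1 : ℕ)).natDegree = m + 2 := by
        rw [Polynomial.natDegree_mul h2X hT1ne, hd1]
        rw [Polynomial.natDegree_mul (by rw [h2]; exact Polynomial.C_ne_zero.mpr two_ne_zero) Polynomial.X_ne_zero, h2]
        simp
        omega
      have hlmul : (2 * X * Polynomial.Chebyshev.T ℝ (m + 1 : ℕ)).leadingCoeff = 2 ^ (m + 1) := by
        rw [Polynomial.leadingCoeff_mul, hl1, Polynomial.leadingCoeff_mul, h2,
          Polynomial.leadingCoeff_C, Polynomial.leadingCoeff_X]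
        have hm : m + 1 - 1 = m := by omega
        rw [hm]; ring
      have hlt : (Polynomial.Chebyshev.T ℝ (m : ℕ)).degree <
          (2 * X * Polynomial.Chebyshev.T ℝ (m + 1 : ℕ)).degree := by
        apply Polynomial.degree_lt_degree
        rw [hdmul, hd0]; omega
      constructor
      · rw [key, Polynomial.natDegree_sub_eq_left_of_natDegree_lt, hdmul]
        rw [hdmul, hd0]; omega
      · rw [key, Polynomial.leadingCoeff_sub_of_degree_lt hlt, hlmul]
        simp

theorem cos_matrix_invertible_iff (r : ℕ) (hr : 0 < r) (x : Fin (r + 1) → ℝ)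
    (A : Matrix (Fin (r + 1)) (Fin (r + 1)) ℝ)
    (hA : ∀ i k : Fin (r + 1), A i k = Real.cos (((k : ℕ) : ℝ) * x i)) :
    IsUnit A ↔ ∀ i j, i ≠ j → Real.cos (x i) ≠ Real.cos (x j) := by
  classical
  set c : Fin (r + 1) → ℝ := fun k => ((2 : ℝ) ^ ((k : ℕ) - 1))⁻¹ with hc
  have hcne : ∀ k, c k ≠ 0 := fun k => inv_ne_zero (pow_ne_zero _ two_ne_zero)
  set p : Fin (r + 1) → Polynomial ℝ :=
    fun k => Polynomial.C (c k) * Polynomial.Chebyshev.T ℝ (k : ℕ) with hp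
  have h_deg : ∀ k, (p k).natDegree = (k : ℕ) := by
    intro k
    rw [hp]
    rw [Polynomial.natDegree_C_mul (hcne k), (chebyT_deg_lead (k : ℕ)).1]
  have h_monic : ∀ k, (p k).Monic := by
    intro k
    unfold Polynomial.Monic
    rw [hp]
    simp only
    rw [Polynomial.leadingCoeff_mul, Polynomial.leadingCoeff_C, (chebyT_deg_lead (k : ℕ)).2]
    rw [hc]
    simp only
    rw [inv_mul_cancel₀ (pow_ne_zero _ two_ne_zero)]
  have hV := Matrix.det_eval_matrixOfPolynomials_eq_det_vandermonde
    (fun i => Real.cos (x i)) p h_deg h_monic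
  have hAd : Matrix.of (fun i j => (p j).eval (Real.cos (x i))) = A * Matrix.diagonal c := by
    ext i j
    rw [Matrix.mul_diagonal, hA, hp]
    simp only [Matrix.of_apply, Polynomial.eval_mul, Polynomial.eval_C]
    rw [Polynomial.Chebyshev.T_real_cos]
    push_cast
    ring
  rw [hAd, Matrix.det_mul, Matrix.det_diagonal] at hV
  have hprod : ∏ i, c i ≠ 0 := Finset.prod_ne_zero_iff.mpr fun i _ => hcne i
  have hdet : A.det ≠ 0 ↔ Function.Injective fun i => Real.cos (x i) := by
    rw [← Matrix.det_vandermonde_ne_zero_iff, hV]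
    constructor
    · intro h
      exact mul_ne_zero h hprod
    · intro h hA0
      exact h (by rw [hA0, zero_mul])
  rw [Matrix.isUnit_iff_isUnit_det, isUnit_iff_ne_zero, hdet]
  constructor
  · intro h i j hij heq
    exact hij (h heq)
  · intro h i j heq
    by_contra hij
    exact h i j hij heq
end

section
/- For every positive integer r, (1/(2r)) · Σ_{i=1}^r csc²((2i-1)π/(4r)) = r, i.e., Σ_{i=1}^r 1/sin²((2i-1)π/(4r)) = 2r². -/
open Real Finset Polynomial Polynomial.Chebyshev

lemma T_natDeg : ∀ n : ℕ, (T ℝ (n : ℤ)).natDegree = n ∧ (T ℝ ((n : ℤ) + 1)).natDegree = n + 1 := by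
  intro n
  induction n with
  | zero => constructor <;> simp [T_zero, T_one]
  | succ n ih =>
    obtain ⟨h1, h2⟩ := ih
    refine ⟨by exact_mod_cast h2, ?_⟩
    have hT : T ℝ ((n : ℤ) + 1 + 1) = 2 * X * T ℝ ((n : ℤ) + 1) - T ℝ (n : ℤ) := by
      have := T_add_two ℝ (n : ℤ)
      convert this using 2
      ring
    have hne : T ℝ ((n : ℤ) + 1) ≠ 0 := by
      intro h; rw [h] at h2; simp at h2
    have hmul : (2 * X * T ℝ ((n : ℤ) + 1)).natDegree = n + 2 := by
      rw [natDegree_mul (by norm_num : (2 * X : ℝ[X]) ≠ 0) hne]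
      simp [h2]
      ring
    have hcast : ((n + 1 : ℕ) : ℤ) + 1 = (n : ℤ) + 1 + 1 := by push_cast; ring
    rw [hcast, hT, natDegree_sub_eq_left_of_natDegree_lt, hmul]
    rw [hmul, h1]; omega

lemma U_eval_one : ∀ n : ℕ, (U ℝ (n : ℤ)).eval 1 = n + 1 ∧ (U ℝ ((n : ℤ) + 1)).eval 1 = n + 2 := by
  intro n
  induction n with
  | zero => constructor <;> simp [U_zero, U_one]
  | succ n ih =>
    obtain ⟨h1, h2⟩ := ih
    refine ⟨by exact_mod_cast (by push_cast; linarith [h2] :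
      (U ℝ ((n:ℤ)+1)).eval 1 = (n:ℝ) + 1 + 1), ?_⟩
    have hU : U ℝ ((n : ℤ) + 1 + 1) = 2 * X * U ℝ ((n : ℤ) + 1) - U ℝ (n : ℤ) := by
      have := U_add_two ℝ (n : ℤ)
      convert this using 2
      ring
    have hcast : ((n + 1 : ℕ) : ℤ) + 1 = (n : ℤ) + 1 + 1 := by push_cast; ring
    rw [hcast, hU]
    simp only [eval_sub, eval_mul, eval_ofNat, eval_X, h1, h2]
    push_cast; ring

theorem csc_sq_sum_eq (r : ℕ) (hr : 0 < r) :
    ∑ i ∈ Finset.range r, 1 / Real.sin ((2 * (i : ℝ) + 1) * π / (4 * r)) ^ 2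
      = 2 * (r : ℝ) ^ 2 := by
  have hrR : (0:ℝ) < r := by exact_mod_cast hr
  set c : ℕ → ℝ := fun i => Real.cos ((2 * i + 1) * π / (2 * r)) with hc
  -- angle bounds
  have hang : ∀ i ∈ range r, 0 < (2 * (i:ℝ) + 1) * π / (2 * r) ∧
      (2 * (i:ℝ) + 1) * π / (2 * r) < π := by
    intro i hi
    have hi' : (i : ℝ) + 1 ≤ r := by exact_mod_cast mem_range.mp hi
    constructor
    · positivity
    · rw [div_lt_iff₀ (by positivity)]
      nlinarith [pi_pos]
  have hclt : ∀ i ∈ range r, c i < 1 := by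
    intro i hi
    obtain ⟨h0, h1⟩ := hang i hi
    have := Real.strictAntiOn_cos (a := 0) (b := (2 * (i:ℝ) + 1) * π / (2 * r))
      ⟨le_refl 0, pi_pos.le⟩ ⟨h0.le, h1.le⟩ h0
    simpa [hc] using this
  -- injectivity of c on range r
  have hinj : ∀ x ∈ range r, ∀ y ∈ range r, c x = c y → x = y := by
    intro x hx y hy hxy
    obtain ⟨hx0, hx1⟩ := hang x hx
    obtain ⟨hy0, hy1⟩ := hang y hy
    have h := Real.injOn_cos ⟨hx0.le, hx1.le⟩ ⟨hy0.le, hy1.le⟩ hxy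
    field_simp at h
    have h' : (x:ℝ) = y := by linarith
    exact_mod_cast h'
  -- step 1 : rewrite the summand
  have hstep : ∀ i ∈ range r,
      1 / Real.sin ((2 * (i:ℝ) + 1) * π / (4 * r)) ^ 2 = 2 / (1 - c i) := by
    intro i hi
    have h2θ : 2 * ((2 * (i:ℝ) + 1) * π / (4 * r)) = (2 * (i:ℝ) + 1) * π / (2 * r) := by
      field_simp; ring
    have hsq : Real.sin ((2 * (i:ℝ) + 1) * π / (4 * r)) ^ 2 = (1 - c i) / 2 := by
      rw [Real.sin_sq_eq_half_sub, h2θ, hc]; ring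
    rw [hsq, one_div_div]
  rw [Finset.sum_congr rfl hstep]
  -- the image finset
  set s : Finset ℝ := (range r).image c with hsdef
  have hcard : s.card = r := by
    rw [hsdef, Finset.card_image_of_injOn hinj, Finset.card_range]
  have hslt : ∀ x ∈ s, x < 1 := by
    intro x hx
    obtain ⟨i, hi, rfl⟩ := Finset.mem_image.mp hx
    exact hclt i hi
  -- the Chebyshev polynomial
  set P : ℝ[X] := T ℝ (r : ℤ) with hP
  have hdeg : P.natDegree = r := (T_natDeg r).1
  have hPne : P ≠ 0 := by
    intro h
    rw [h, natDegree_zero] at hdeg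
    omega
  have hroot : ∀ x ∈ s, P.IsRoot x := by
    intro x hx
    obtain ⟨i, hi, rfl⟩ := Finset.mem_image.mp hx
    have hT := Polynomial.Chebyshev.T_real_cos ((2 * (i:ℝ) + 1) * π / (2 * r)) (r : ℤ)
    have harg : ((r : ℤ) : ℝ) * ((2 * (i:ℝ) + 1) * π / (2 * r)) = i * π + π / 2 := by
      push_cast
      field_simp
    have hz : Real.cos ((i:ℝ) * π + π / 2) = 0 := by
      rw [Real.cos_add]
      simp [Real.sin_nat_mul_pi]
    simp only [IsRoot, hP, hc, hT, harg, hz]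
  -- roots of P equal s.val
  have hle : s.val ≤ P.roots := by
    rw [Multiset.le_iff_count]
    intro a
    by_cases ha : a ∈ s
    · rw [Multiset.count_eq_one_of_mem s.nodup ha, Multiset.one_le_count_iff_mem]
      exact Polynomial.mem_roots'.mpr ⟨hPne, hroot a ha⟩
    · rw [Multiset.count_eq_zero_of_notMem ha]
      omega
  have hcardroots : Multiset.card P.roots ≤ r := hdeg ▸ Polynomial.card_roots' P
  have hrootseq : P.roots = s.val := by
    symm
    apply Multiset.eq_of_le_of_card_le hle
    rw [Finset.card_def] at hcard
    omega
  -- factorization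
  have hfact : C P.leadingCoeff * ∏ x ∈ s, (X - C x) = P := by
    have := Polynomial.C_leadingCoeff_mul_prod_multiset_X_sub_C
      (p := P) (by rw [hrootseq, ← Finset.card_def, hcard, hdeg])
    rw [hrootseq] at this
    exact this
  set lc : ℝ := P.leadingCoeff with hlc
  -- evaluations
  have hP1 : P.eval 1 = 1 := by
    have hT := Polynomial.Chebyshev.T_real_cos 0 (r : ℤ)
    simpa [hP] using hT
  have hP'1 : P.derivative.eval 1 = (r : ℝ) ^ 2 := by
    rw [hP, Polynomial.Chebyshev.T_derivative_eq_U]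
    have hcast : (r : ℤ) - 1 = ((r - 1 : ℕ) : ℤ) := by omega
    rw [hcast]
    have hU := (U_eval_one (r - 1)).1
    simp only [eval_mul, eval_intCast, hU]
    have : ((r - 1 : ℕ) : ℝ) = (r : ℝ) - 1 := by
      push_cast [Nat.cast_sub hr]; ring
    rw [this]
    push_cast
    ring
  -- A = product of (1 - x)
  set A : ℝ := ∏ x ∈ s, (1 - x) with hA
  have hApos : 0 < A := by
    apply Finset.prod_pos
    intro x hx
    linarith [hslt x hx]
  have hevalP : lc * A = 1 := by
    have := congrArg (Polynomial.eval 1) hfact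
    simpa [eval_prod, hA] using this.trans hP1
  have hevalP' : lc * (∑ x ∈ s, ∏ y ∈ s.erase x, (1 - y)) = (r : ℝ) ^ 2 := by
    have hprod : derivative (∏ x ∈ s, (X - C x))
        = ∑ x ∈ s, (∏ y ∈ s.erase x, (X - C y)) * derivative (X - C x) := by
      rw [Finset.prod_eq_multiset_prod, Polynomial.derivative_prod,
        Finset.sum_eq_multiset_sum]
      rfl
    have hd : P.derivative
        = C lc * ∑ x ∈ s, (∏ y ∈ s.erase x, (X - C y)) * derivative (X - C x) := by
      conv_lhs => rw [← hfact]
      rw [Polynomial.derivative_C_mul, hprod]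
    have := congrArg (Polynomial.eval 1) hd
    rw [hP'1] at this
    simp only [derivative_sub, derivative_X, derivative_C, sub_zero, mul_one, eval_mul, eval_C,
      eval_finset_sum, eval_prod, eval_sub, eval_X, eval_one] at this
    linarith [this]
  -- sum of reciprocals
  have hsum_recip : ∑ x ∈ s, 1 / (1 - x) = (r : ℝ) ^ 2 := by
    have herase : ∀ x ∈ s, ∏ y ∈ s.erase x, (1 - y) = A * (1 / (1 - x)) := by
      intro x hx
      have hxne : (1 : ℝ) - x ≠ 0 := by linarith [hslt x hx]
      rw [mul_one_div, eq_div_iff hxne, mul_comm, hA, Finset.mul_prod_erase s _ hx]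
    have hB : ∑ x ∈ s, ∏ y ∈ s.erase x, (1 - y) = A * ∑ x ∈ s, 1 / (1 - x) := by
      rw [Finset.mul_sum]
      exact Finset.sum_congr rfl herase
    rw [hB] at hevalP'
    calc ∑ x ∈ s, 1 / (1 - x) = (lc * A) * ∑ x ∈ s, 1 / (1 - x) := by
          rw [hevalP, one_mul]
      _ = (r : ℝ) ^ 2 := by rw [mul_assoc]; exact hevalP'
  -- conclude
  have himg : ∑ i ∈ range r, 2 / (1 - c i) = ∑ x ∈ s, 2 / (1 - x) :=
    (Finset.sum_image (f := fun x : ℝ => 2 / (1 - x)) hinj).symm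
  rw [himg]
  have : ∑ x ∈ s, 2 / (1 - x) = 2 * ∑ x ∈ s, 1 / (1 - x) := by
    rw [Finset.mul_sum]
    apply Finset.sum_congr rfl
    intro x _
    ring
  rw [this, hsum_recip]
end

section
/- For every positive integer r, Σ_{i=1}^{r-1} 1/sin²(iπ/(2r)) = 2(r²-1)/3. -/
open Real Finset

lemma lemA (n : ℕ) (z : ℂ) :
    (1 - z)^2 * ∑ j ∈ Finset.range n, (j:ℂ) * z^j
      = z - n * z^n + ((n:ℂ) - 1) * z^(n+1) := by
  induction n with
  | zero => simp
  | succ n ih =>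
    rw [Finset.sum_range_succ, mul_add, ih]
    push_cast
    ring

lemma lemB (n : ℕ) (z : ℂ) (hz1 : z ≠ 1) (hzn : z^n = 1) :
    ∑ j ∈ Finset.range n, (j:ℂ) * z^j = n / (z - 1) := by
  have h := lemA n z
  rw [hzn] at h
  rw [pow_succ z n, hzn, one_mul] at h
  have hz : z - 1 ≠ 0 := sub_ne_zero.mpr hz1
  rw [eq_div_iff hz]
  have h2 : (z-1) * ((∑ j ∈ Finset.range n, (j:ℂ) * z^j) * (z - 1)) = (z-1) * n := by
    linear_combination h
  exact mul_left_cancel₀ hz h2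

lemma sumId (n : ℕ) : ∑ j ∈ Finset.range n, (j:ℂ) = n * (n-1) / 2 := by
  induction n with
  | zero => simp
  | succ n ih => rw [Finset.sum_range_succ, ih]; push_cast; ring

lemma sumSq (n : ℕ) : ∑ j ∈ Finset.range n, (j:ℂ)^2 = n * (n-1) * (2*n-1) / 6 := by
  induction n with
  | zero => simp
  | succ n ih => rw [Finset.sum_range_succ, ih]; push_cast; ring

lemma keySum (n : ℕ) (hn : 0 < n) (ω : ℂ) (hω : IsPrimitiveRoot ω n) :
    ∑ k ∈ Finset.Ico 1 n, ((1 - ω^k) * (1 - (ω^k)⁻¹))⁻¹ = ((n:ℂ)^2 - 1) / 12 := by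
  have hne : (n:ℂ) ≠ 0 := Nat.cast_ne_zero.mpr hn.ne'
  have hω0 : ω ≠ 0 := hω.ne_zero hn.ne'
  have hterm : ∀ k ∈ Finset.Ico 1 n, ((1 - ω^k) * (1 - (ω^k)⁻¹))⁻¹
      = ((∑ j ∈ Finset.range n, (j:ℂ) * (ω^k)^j) *
         (∑ j ∈ Finset.range n, (j:ℂ) * ((ω^k)⁻¹)^j)) / (n:ℂ)^2 := by
    intro k hk
    rw [Finset.mem_Ico] at hk
    have hz1 : ω^k ≠ 1 := hω.pow_ne_one_of_pos_of_lt (by omega) hk.2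
    have hzn : (ω^k)^n = 1 := by
      rw [← pow_mul, mul_comm, pow_mul, hω.pow_eq_one, one_pow]
    have hz0 : ω^k ≠ 0 := pow_ne_zero _ hω0
    have hi1 : (ω^k)⁻¹ ≠ 1 := by
      rw [ne_eq, inv_eq_one]; exact hz1
    have hin : ((ω^k)⁻¹)^n = 1 := by rw [inv_pow, hzn, inv_one]
    rw [lemB n _ hz1 hzn, lemB n _ hi1 hin]
    have h1 : (1:ℂ) - ω^k ≠ 0 := sub_ne_zero.mpr (Ne.symm hz1)
    have h2 : (1:ℂ) - (ω^k)⁻¹ ≠ 0 := sub_ne_zero.mpr (Ne.symm hi1)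
    have h3 : ω^k - 1 ≠ 0 := sub_ne_zero.mpr hz1
    have h4 : (ω^k)⁻¹ - 1 ≠ 0 := sub_ne_zero.mpr hi1
    field_simp
  rw [Finset.sum_congr rfl hterm, ← Finset.sum_div]
  have hexp : ∀ k ∈ Finset.Ico 1 n,
      (∑ j ∈ Finset.range n, (j:ℂ) * (ω^k)^j) *
        (∑ j ∈ Finset.range n, (j:ℂ) * ((ω^k)⁻¹)^j)
      = ∑ j ∈ Finset.range n, ∑ l ∈ Finset.range n,
          ((j:ℂ) * l) * (ω^j * (ω^l)⁻¹)^k := by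
    intro k _
    rw [Finset.sum_mul_sum]
    refine Finset.sum_congr rfl fun j _ => Finset.sum_congr rfl fun l _ => ?_
    have e1 : (ω^k)^j = (ω^j)^k := by rw [← pow_mul, ← pow_mul, mul_comm]
    have e2 : (ω^k)⁻¹ ^ l = ((ω^l)⁻¹)^k := by
      rw [← inv_pow, ← inv_pow, ← pow_mul, ← pow_mul, mul_comm]
    rw [e1, e2, mul_pow]
    ring
  rw [Finset.sum_congr rfl hexp]
  rw [Finset.sum_comm]
  have hswap : ∀ j ∈ Finset.range n,
      ∑ k ∈ Finset.Ico 1 n, ∑ l ∈ Finset.range n, ((j:ℂ) * l) * (ω^j * (ω^l)⁻¹)^k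
      = ∑ l ∈ Finset.range n, ((j:ℂ) * l) * ((if j = l then (n:ℂ) else 0) - 1) := by
    intro j hj
    rw [Finset.sum_comm]
    refine Finset.sum_congr rfl fun l hl => ?_
    rw [← Finset.mul_sum]
    congr 1
    set w := ω^j * (ω^l)⁻¹ with hw
    have hwn : w^n = 1 := by
      rw [hw, mul_pow, inv_pow, ← pow_mul, ← pow_mul, mul_comm j n, mul_comm l n,
        pow_mul, pow_mul, hω.pow_eq_one, one_pow, one_pow, inv_one, mul_one]
    have hrange : ∑ k ∈ Finset.range n, w^k = if j = l then (n:ℂ) else 0 := by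
      by_cases h : j = l
      · subst h
        have : w = 1 := by
          rw [hw, mul_inv_cancel₀ (pow_ne_zero _ hω0)]
        simp [this]
      · have hw1 : w ≠ 1 := by
          intro hc
          apply h
          apply hω.pow_inj (Finset.mem_range.mp hj) (Finset.mem_range.mp hl)
          have hl0 : ω^l ≠ 0 := pow_ne_zero _ hω0
          rw [hw] at hc
          field_simp at hc
          exact hc
        rw [geom_sum_eq hw1, hwn]
        simp [h]
    have hico : ∑ k ∈ Finset.Ico 1 n, w^k = (∑ k ∈ Finset.range n, w^k) - 1 := by
      rw [Finset.range_eq_Ico, Finset.sum_eq_sum_Ico_succ_bot hn, pow_zero]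
      ring
    rw [hico, hrange]
  rw [Finset.sum_congr rfl hswap]
  have hfin : ∀ j ∈ Finset.range n,
      ∑ l ∈ Finset.range n, ((j:ℂ) * l) * ((if j = l then (n:ℂ) else 0) - 1)
      = (j:ℂ)^2 * n - (j:ℂ) * ∑ l ∈ Finset.range n, (l:ℂ) := by
    intro j hj
    have : ∀ l ∈ Finset.range n, ((j:ℂ) * l) * ((if j = l then (n:ℂ) else 0) - 1)
        = (if j = l then ((j:ℂ)*l*n) else 0) - (j:ℂ)*l := by
      intro l _
      by_cases h : j = l
      · simp [h]; ring
      · simp [h]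
    rw [Finset.sum_congr rfl this, Finset.sum_sub_distrib, Finset.sum_ite_eq, if_pos hj,
      ← Finset.mul_sum]
    ring
  rw [Finset.sum_congr rfl hfin, Finset.sum_sub_distrib, ← Finset.sum_mul, ← Finset.sum_mul,
    sumId, sumSq]
  field_simp
  ring

lemma termTransfer (θ : ℝ) :
    (1 - Complex.exp (θ * Complex.I)) * (1 - (Complex.exp (θ * Complex.I))⁻¹)
      = ((2 - 2 * Real.cos θ : ℝ) : ℂ) := by
  rw [← Complex.exp_neg, Complex.exp_mul_I]
  rw [show -((θ:ℂ) * Complex.I) = (-θ:ℂ) * Complex.I by ring, Complex.exp_mul_I]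
  rw [Complex.cos_neg, Complex.sin_neg]
  have h := Complex.sin_sq_add_cos_sq (θ:ℂ)
  push_cast
  linear_combination h - Complex.sin (θ:ℂ)^2 * Complex.I_sq

theorem csc_sq_sum_eq_second (r : ℕ) (hr : 0 < r) :
    ∑ i ∈ Finset.Ico 1 r, 1 / Real.sin ((i : ℝ) * π / (2 * r)) ^ 2
      = 2 * ((r : ℝ) ^ 2 - 1) / 3 := by
  have hrR : (r:ℝ) ≠ 0 := Nat.cast_ne_zero.mpr hr.ne'
  have hrC : (r:ℂ) ≠ 0 := Nat.cast_ne_zero.mpr hr.ne'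
  set n := 2 * r with hndef
  have hn0 : 0 < n := by omega
  set ω : ℂ := Complex.exp (2 * ↑π * Complex.I / n) with hωdef
  have hω : IsPrimitiveRoot ω n := Complex.isPrimitiveRoot_exp n hn0.ne'
  have hkey := keySum n hn0 ω hω
  -- sin nonzero on range
  have hsin : ∀ k, k ∈ Finset.Ico 1 n → Real.sin ((k:ℝ) * π / (2*r)) ≠ 0 := by
    intro k hk
    rw [Finset.mem_Ico] at hk
    have hk1 : (1:ℝ) ≤ (k:ℝ) := by exact_mod_cast hk.1
    have hk2 : (k:ℝ) < 2*r := by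
      have : (k:ℝ) < (n:ℝ) := by exact_mod_cast hk.2
      rw [hndef] at this; push_cast at this; linarith
    apply ne_of_gt
    apply Real.sin_pos_of_pos_of_lt_pi
    · have : (0:ℝ) < (r:ℝ) := by positivity
      positivity
    · rw [div_lt_iff₀ (by positivity)]
      nlinarith [Real.pi_pos]
  -- termwise real transfer
  have htr : ∀ k ∈ Finset.Ico 1 n, ((1 - ω^k) * (1 - (ω^k)⁻¹))⁻¹
      = ((1 / Real.sin ((k:ℝ) * π / (2*r)) ^ 2 / 4 : ℝ) : ℂ) := by
    intro k hk
    have hωk : ω^k = Complex.exp ((((k:ℝ) * π / r : ℝ) : ℂ) * Complex.I) := by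
      rw [hωdef, ← Complex.exp_nat_mul]
      congr 1
      rw [hndef]
      push_cast
      field_simp
    rw [hωk, termTransfer]
    rw [← Complex.ofReal_inv]
    congr 1
    have hx : (k:ℝ) * π / (2*r) = ((k:ℝ) * π / r) / 2 := by ring
    have hhalf : Real.sin ((k:ℝ) * π / (2*r)) ^ 2 = (1 - Real.cos ((k:ℝ) * π / r)) / 2 := by
      rw [Real.sin_sq_eq_half_sub,
        show 2*((k:ℝ)*π/(2*r)) = (k:ℝ)*π/r by field_simp]
      ring
    have hs := hsin k hk
    have hs2 : Real.sin ((k:ℝ) * π / (2*r)) ^ 2 ≠ 0 := pow_ne_zero _ hs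
    rw [show 2 - 2 * Real.cos ((k:ℝ) * π / r)
        = 4 * Real.sin ((k:ℝ) * π / (2*r)) ^ 2 by rw [hhalf]; ring]
    field_simp
  rw [Finset.sum_congr rfl htr, ← Complex.ofReal_sum] at hkey
  have hsum2 : ∑ k ∈ Finset.Ico 1 n, (1 / Real.sin ((k:ℝ) * π / (2*r)) ^ 2 / 4)
      = ((n:ℝ)^2 - 1) / 12 := by
    exact_mod_cast hkey
  have hfull : ∑ k ∈ Finset.Ico 1 n, (1 / Real.sin ((k:ℝ) * π / (2*r)) ^ 2)
      = ((n:ℝ)^2 - 1) / 3 := by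
    have := hsum2
    rw [← Finset.sum_div] at this
    linarith
  -- symmetry
  set g : ℕ → ℝ := fun k => 1 / Real.sin ((k:ℝ) * π / (2*r)) ^ 2 with hg
  have hsplit : ∑ k ∈ Finset.Ico 1 r, g k + ∑ k ∈ Finset.Ico r n, g k
      = ∑ k ∈ Finset.Ico 1 n, g k :=
    Finset.sum_Ico_consecutive _ hr (by omega)
  have hbot : ∑ k ∈ Finset.Ico r n, g k = g r + ∑ k ∈ Finset.Ico (r+1) n, g k :=
    Finset.sum_eq_sum_Ico_succ_bot (by omega) _
  have hgr : g r = 1 := by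
    rw [hg]
    simp only
    rw [show (r:ℝ) * π / (2*r) = π/2 by field_simp, Real.sin_pi_div_two]
    norm_num
  have hrefl : ∑ k ∈ Finset.Ico (r+1) n, g k = ∑ k ∈ Finset.Ico 1 r, g k := by
    apply Finset.sum_nbij' (i := fun k => n - k) (j := fun k => n - k)
    · intro k hk
      rw [Finset.mem_Ico] at *
      omega
    · intro k hk
      rw [Finset.mem_Ico] at *
      omega
    · intro k hk
      rw [Finset.mem_Ico] at hk
      omega
    · intro k hk
      rw [Finset.mem_Ico] at hk
      omega
    · intro k hk
      rw [Finset.mem_Ico] at hk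
      rw [hg]
      simp only
      have hcast : ((n - k : ℕ) : ℝ) = (n:ℝ) - k := by
        rw [Nat.cast_sub]; omega
      rw [hcast]
      have hnR : (n:ℝ) = 2*r := by rw [hndef]; push_cast; ring
      rw [show ((n:ℝ) - k) * π / (2*r) = π - (k:ℝ) * π / (2*r) by
        rw [hnR]; field_simp]
      rw [Real.sin_pi_sub]
  have hnR : (n:ℝ) = 2*r := by rw [hndef]; push_cast; ring
  rw [hnR] at hfull
  rw [← hsplit, hbot, hgr, hrefl] at hfull
  have haux : ((2*(r:ℝ))^2 - 1)/3 = 2*(2*((r:ℝ)^2-1)/3) + 1 := by ring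
  show ∑ k ∈ Finset.Ico 1 r, g k = 2 * ((r : ℝ) ^ 2 - 1) / 3
  linarith
end

section
/- For every positive integer r and every integer i with 1 ≤ i ≤ r-1, -(2/r)·Σ_{k=1}^{r-1} k²·cos(kiπ/r) - r·cos(iπ) = (-1)^{i-1}/sin²(iπ/(2r)). -/
open Real Finset

private lemma cube_sum (w : ℂ) (n : ℕ) :
    (w - 1) ^ 3 * ∑ k ∈ Finset.range n, (k : ℂ) ^ 2 * w ^ k
      = w ^ n * (((n : ℂ) - 1) ^ 2 * w ^ 2 - (2 * (n : ℂ) ^ 2 - 2 * n - 1) * w + (n : ℂ) ^ 2)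
        - w ^ 2 - w := by
  induction n with
  | zero => simp
  | succ n ih =>
      rw [Finset.sum_range_succ, mul_add, ih, pow_succ]
      push_cast
      ring

theorem cos_sum_identity (r i : ℕ) (hr : 0 < r) (hi1 : 1 ≤ i) (hir : i ≤ r - 1) :
    -(2 / (r : ℝ)) * ∑ k ∈ Finset.Ico 1 r, (k : ℝ) ^ 2 * Real.cos (k * i * π / r)
        - r * Real.cos (i * π)
      = (-1 : ℝ) ^ (i - 1) / Real.sin (i * π / (2 * r)) ^ 2 := by
  have hirlt : i < r := by omega
  have hrR : (r : ℝ) ≠ 0 := Nat.cast_ne_zero.mpr hr.ne'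
  set θ : ℝ := i * π / r with hθ
  have hθpos : 0 < θ := by
    apply div_pos (mul_pos _ Real.pi_pos) (by exact_mod_cast hr)
    exact_mod_cast hi1
  have hθlt : θ < π := by
    rw [hθ, div_lt_iff₀ (by exact_mod_cast hr)]
    have : (i : ℝ) < r := by exact_mod_cast hirlt
    nlinarith [Real.pi_pos]
  set s : ℝ := Real.sin (θ / 2) with hs
  have hs_pos : 0 < s := Real.sin_pos_of_pos_of_lt_pi (by linarith) (by linarith [Real.pi_pos])
  have hsne : s ≠ 0 := hs_pos.ne'
  have hcosθ : Real.cos θ = 1 - 2 * s ^ 2 := by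
    have h1 := Real.cos_two_mul' (θ / 2)
    have h2 := Real.sin_sq_add_cos_sq (θ / 2)
    have h3 : (2:ℝ) * (θ/2) = θ := by ring
    rw [h3] at h1
    rw [hs]; nlinarith
  set z : ℂ := Complex.exp (θ * Complex.I) with hz
  have hz0 : z ≠ 0 := Complex.exp_ne_zero _
  have hsinθ : Real.sin θ > 0 := Real.sin_pos_of_pos_of_lt_pi hθpos hθlt
  have hz1 : z ≠ 1 := by
    intro h
    have him : z.im = Real.sin θ := Complex.exp_ofReal_mul_I_im θ
    rw [h, Complex.one_im] at him
    linarith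
  have hz1' : z - 1 ≠ 0 := sub_ne_zero.mpr hz1
  have hzinv : z⁻¹ = Complex.exp (-(θ * Complex.I)) := by
    rw [← Complex.exp_neg]
  have hzr : z ^ r = (-1 : ℂ) ^ i := by
    rw [hz, ← Complex.exp_nat_mul]
    have hrθ : (r : ℝ) * θ = i * π := by rw [hθ]; field_simp
    have : (r : ℂ) * ((θ:ℝ) * Complex.I) = (i : ℕ) * (π * Complex.I) := by
      rw [show (r:ℂ) * ((θ:ℝ) * Complex.I) = (((r:ℝ) * θ : ℝ) : ℂ) * Complex.I by push_cast; ring, hrθ]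
      push_cast; ring
    rw [this, Complex.exp_nat_mul, Complex.exp_pi_mul_I]
  have hwr : (z⁻¹) ^ r = (-1 : ℂ) ^ i := by
    rw [inv_pow, hzr, ← inv_pow, inv_neg, inv_one]
  set ε : ℂ := (-1 : ℂ) ^ i with hε
  set C : ℂ := ∑ k ∈ Finset.range r, (k : ℂ) ^ 2 * z ^ k with hC
  set D : ℂ := ∑ k ∈ Finset.range r, (k : ℂ) ^ 2 * (z⁻¹) ^ k with hD
  have h1 := cube_sum z r
  have h2 := cube_sum z⁻¹ r
  rw [hzr] at h1
  rw [hwr] at h2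
  rw [← hC] at h1
  rw [← hD] at h2
  have h2' : (z - 1) ^ 3 * D
      = -(ε * (((r : ℂ) - 1) ^ 2 * z - (2 * (r : ℂ) ^ 2 - 2 * r - 1) * z ^ 2 + (r : ℂ) ^ 2 * z ^ 3)) + z + z ^ 2 := by
    rw [show (z-1)^3 = -(z^3*(z⁻¹-1)^3) from by field_simp; ring,
        show -(z^3*(z⁻¹-1)^3)*D = -(z^3*((z⁻¹-1)^3*D)) from by ring, h2]
    have hzz : z * z⁻¹ = 1 := mul_inv_cancel₀ hz0
    linear_combination (z * (z * z⁻¹ + 1) * (1 - ε * ((r:ℂ)-1)^2)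
      + z^2 * (1 + ε * (2 * (r:ℂ)^2 - 2*(r:ℂ) - 1))) * hzz
  have hkey : ((z - 1) ^ 2 * (C + D)) * (z - 1)
      = (ε * (-(r : ℂ) ^ 2 * z ^ 2 + (2 * (r : ℂ) ^ 2 - 4 * r) * z - (r : ℂ) ^ 2)) * (z - 1) := by
    linear_combination h1 + h2'
  have hkey2 : (z - 1) ^ 2 * (C + D)
      = ε * (-(r : ℂ) ^ 2 * z ^ 2 + (2 * (r : ℂ) ^ 2 - 4 * r) * z - (r : ℂ) ^ 2) :=
    mul_right_cancel₀ hz1' hkey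
  have hzs : (z - 1) ^ 2 = -4 * (s : ℂ) ^ 2 * z := by
    have htc := Complex.two_cos ((θ:ℝ) : ℂ)
    rw [show -((θ:ℝ):ℂ) * Complex.I = -(((θ:ℝ):ℂ) * Complex.I) by ring] at htc
    rw [← hz, ← hzinv] at htc
    have hcos : (Complex.cos ((θ:ℝ) : ℂ)) = ((1 : ℂ) - 2 * (s : ℂ) ^ 2) := by
      rw [← Complex.ofReal_cos, hcosθ]; push_cast; ring
    rw [hcos] at htc
    have hmul : z * (2 * ((1:ℂ) - 2 * (s:ℂ)^2)) = z * (z + z⁻¹) := by rw [← htc]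
    have hzz : z * z⁻¹ = 1 := mul_inv_cancel₀ hz0
    linear_combination -hmul - hzz
  set S : ℝ := ∑ k ∈ Finset.Ico 1 r, (k : ℝ) ^ 2 * Real.cos (k * i * π / r) with hS
  have hCD : C + D = 2 * (S : ℂ) := by
    rw [hC, hD, ← Finset.sum_add_distrib]
    have hterm : ∀ k ∈ Finset.range r, (k : ℂ) ^ 2 * z ^ k + (k : ℂ) ^ 2 * (z⁻¹) ^ k
        = 2 * ((((k : ℝ) ^ 2 * Real.cos (k * i * π / r)) : ℝ) : ℂ) := by
      intro k _
      have hzk : z ^ k = Complex.exp ((((k : ℝ) * θ : ℝ)) * Complex.I) := by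
        rw [hz, ← Complex.exp_nat_mul]; push_cast; ring_nf
      have hzk' : (z⁻¹) ^ k = Complex.exp (-((((k : ℝ) * θ : ℝ)) : ℂ) * Complex.I) := by
        rw [hzinv, ← Complex.exp_nat_mul]; push_cast; ring_nf
      have hsum : z ^ k + (z⁻¹) ^ k = 2 * Complex.cos (((k:ℝ) * θ : ℝ) : ℂ) := by
        rw [hzk, hzk']; exact (Complex.two_cos _).symm
      have harg : (k : ℝ) * θ = (k:ℝ) * i * π / r := by rw [hθ]; ring
      calc (k : ℂ)^2 * z^k + (k : ℂ)^2 * (z⁻¹)^k = (k:ℂ)^2 * (z^k + (z⁻¹)^k) := by ring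
        _ = (k:ℂ)^2 * (2 * Complex.cos (((k:ℝ) * θ : ℝ) : ℂ)) := by rw [hsum]
        _ = _ := by rw [← Complex.ofReal_cos, harg]; push_cast; ring
    rw [Finset.sum_congr rfl hterm, ← Finset.mul_sum, hS]
    rw [Finset.range_eq_Ico, Finset.sum_eq_sum_Ico_succ_bot hr]
    push_cast
    ring
  have hcplx : (-8 * (s : ℂ) ^ 2 * (S : ℂ)) * z = (4 * ε * ((r : ℂ) ^ 2 * (s : ℂ) ^ 2 - r)) * z := by
    have hthis := hkey2
    rw [hzs, hCD] at hthis
    have hz2 : z ^ 2 + 1 = 2 * z - 4 * (s : ℂ) ^ 2 * z := by linear_combination hzs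
    linear_combination hthis + (-(r:ℂ)^2 * ε) * hz2
  have hcplx2 : -8 * (s : ℂ) ^ 2 * (S : ℂ) = 4 * ε * ((r : ℂ) ^ 2 * (s : ℂ) ^ 2 - r) :=
    mul_right_cancel₀ hz0 hcplx
  have hreal : -8 * s ^ 2 * S = 4 * (-1 : ℝ) ^ i * ((r:ℝ) ^ 2 * s ^ 2 - r) := by
    have hcast : ((-8 * s ^ 2 * S : ℝ) : ℂ) = ((4 * (-1 : ℝ) ^ i * ((r:ℝ) ^ 2 * s ^ 2 - r) : ℝ) : ℂ) := by
      push_cast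
      rw [hε] at hcplx2
      linear_combination hcplx2
    exact_mod_cast hcast
  have hsin_eq : Real.sin (i * π / (2 * r)) = s := by
    rw [hs, hθ]; congr 1; ring
  have hcosipi : Real.cos ((i:ℝ) * π) = (-1 : ℝ) ^ i := by
    rw [show (i:ℝ) * π = i * π - 0 by ring, Real.cos_nat_mul_pi_sub, Real.cos_zero, mul_one]
  have hpow : ∀ j : ℕ, 1 ≤ j → (-1:ℝ)^(j-1) = -(-1:ℝ)^j := by
    intro j hj
    obtain ⟨m, rfl⟩ : ∃ m, j = m + 1 := ⟨j - 1, by omega⟩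
    simp [pow_succ]
  rw [hsin_eq, hcosipi, hpow i hi1]
  have hSval : S = ((-1:ℝ)^i * ((r:ℝ) - (r:ℝ)^2 * s^2)) / (2 * s^2) := by
    rw [eq_div_iff (by positivity)]
    linarith [hreal]
  rw [hSval]
  field_simp
  ring
end

section
/- Let Ω_1 < … < Ω_r be positive reals, and let f(x) = a_0 + Σ_{k=1}^r (a_k cos(Ω_k x) + b_k sin(Ω_k x)) with real coefficients. Let d be an odd positive integer, let x_1,…,x_r ∈ ℝ be such that the r×r matrix A with A_{i,k} = sin(Ω_k x_i) is invertible, and let c ∈ ℝ^r solve Aᵀ c = p where p_k = (-1)^{(d-1)/2} Ω_k^d. Then for every x̄ ∈ ℝ, f^{(d)}(x̄) = (1/2)·Σ_{i=1}^r c_i·(f(x̄ + x_i) - f(x̄ - x_i)). -/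
open Real Finset Matrix

private lemma hasDerivAt_trigpoly {r : ℕ} (a0 : ℝ) (Ω a b : Fin r → ℝ) (x : ℝ) :
    HasDerivAt (fun t => a0 + ∑ k, (a k * Real.cos (Ω k * t) + b k * Real.sin (Ω k * t)))
      (∑ k, ((Ω k * b k) * Real.cos (Ω k * x) + (-(Ω k * a k)) * Real.sin (Ω k * x))) x := by
  have h : ∀ k : Fin r, k ∈ Finset.univ →
      HasDerivAt (fun t => a k * Real.cos (Ω k * t) + b k * Real.sin (Ω k * t))
        ((Ω k * b k) * Real.cos (Ω k * x) + (-(Ω k * a k)) * Real.sin (Ω k * x)) x := by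
    intro k _
    have hid : HasDerivAt (fun t : ℝ => Ω k * t) (Ω k) x := by
      simpa using (hasDerivAt_id x).const_mul (Ω k)
    have hc : HasDerivAt (fun t => Real.cos (Ω k * t)) (-Real.sin (Ω k * x) * Ω k) x :=
      (Real.hasDerivAt_cos (Ω k * x)).comp x hid
    have hs : HasDerivAt (fun t => Real.sin (Ω k * t)) (Real.cos (Ω k * x) * Ω k) x :=
      (Real.hasDerivAt_sin (Ω k * x)).comp x hid
    have := (hc.const_mul (a k)).fun_add (hs.const_mul (b k))
    refine this.congr_deriv ?_
    ring
  simpa using (HasDerivAt.fun_sum h).const_add a0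

private lemma deriv_trigpoly {r : ℕ} (a0 : ℝ) (Ω a b : Fin r → ℝ) :
    deriv (fun t => a0 + ∑ k, (a k * Real.cos (Ω k * t) + b k * Real.sin (Ω k * t)))
      = fun x => (0:ℝ) + ∑ k, ((Ω k * b k) * Real.cos (Ω k * x) + (-(Ω k * a k)) * Real.sin (Ω k * x)) := by
  funext x
  rw [(hasDerivAt_trigpoly a0 Ω a b x).deriv, zero_add]

private lemma key_iter {r : ℕ} (Ω : Fin r → ℝ) : ∀ (m : ℕ) (a0 : ℝ) (a b : Fin r → ℝ),
    iteratedDeriv (2*m+1) (fun t => a0 + ∑ k, (a k * Real.cos (Ω k * t) + b k * Real.sin (Ω k * t)))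
      = fun x => ∑ k, (-1:ℝ)^m * Ω k ^ (2*m+1) *
          (b k * Real.cos (Ω k * x) - a k * Real.sin (Ω k * x)) := by
  intro m
  induction m with
  | zero =>
    intro a0 a b
    have : 2*0+1 = 1 := rfl
    rw [this, iteratedDeriv_one, deriv_trigpoly]
    funext x
    rw [zero_add]
    refine Finset.sum_congr rfl fun k _ => by ring
  | succ m ih =>
    intro a0 a b
    have h : 2*(m+1)+1 = (2*m+1)+1+1 := by ring
    rw [h, iteratedDeriv_succ', deriv_trigpoly, iteratedDeriv_succ', deriv_trigpoly, ih]
    funext x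
    refine Finset.sum_congr rfl fun k _ => ?_
    rw [pow_succ, show (2*m+1+1+1) = (2*m)+3 by ring, pow_add]
    ring

theorem epsr_odd (r : ℕ) (hr : 0 < r) (Ω : Fin r → ℝ)
    (hΩpos : ∀ k, 0 < Ω k) (hΩmono : StrictMono Ω)
    (a0 : ℝ) (a b : Fin r → ℝ) (f : ℝ → ℝ)
    (hf : ∀ x, f x = a0 + ∑ k, (a k * Real.cos (Ω k * x) + b k * Real.sin (Ω k * x)))
    (d : ℕ) (hd : Odd d)
    (x : Fin r → ℝ) (A : Matrix (Fin r) (Fin r) ℝ)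
    (hA : ∀ i k, A i k = Real.sin (Ω k * x i)) (hinv : IsUnit A)
    (c : Fin r → ℝ)
    (hc : Aᵀ.mulVec c = fun k => (-1 : ℝ) ^ ((d - 1) / 2) * Ω k ^ d) :
    ∀ xbar : ℝ, iteratedDeriv d f xbar =
      (1 / 2) * ∑ i, c i * (f (xbar + x i) - f (xbar - x i)) := by
  intro xbar
  obtain ⟨m, hm⟩ := hd
  have hf' : f = fun t => a0 + ∑ k, (a k * Real.cos (Ω k * t) + b k * Real.sin (Ω k * t)) :=
    funext hf
  have hdm : (d - 1) / 2 = m := by omega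
  have hck : ∀ k, ∑ i, Real.sin (Ω k * x i) * c i = (-1:ℝ)^m * Ω k ^ (2*m+1) := by
    intro k
    have := congrFun hc k
    simp only [Matrix.mulVec, Matrix.transpose_apply, dotProduct, hA, hdm, hm] at this
    simpa using this
  rw [hf', hm, key_iter]
  -- expand the RHS differences
  have expand : ∀ i : Fin r,
      ((fun t => a0 + ∑ k, (a k * Real.cos (Ω k * t) + b k * Real.sin (Ω k * t))) (xbar + x i)
        - (fun t => a0 + ∑ k, (a k * Real.cos (Ω k * t) + b k * Real.sin (Ω k * t))) (xbar - x i))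
      = ∑ k, 2 * Real.sin (Ω k * x i) *
          (b k * Real.cos (Ω k * xbar) - a k * Real.sin (Ω k * xbar)) := by
    intro i
    simp only [add_sub_add_left_eq_sub]
    rw [← Finset.sum_sub_distrib]
    refine Finset.sum_congr rfl fun k _ => ?_
    rw [mul_add, mul_sub, Real.cos_add, Real.cos_sub, Real.sin_add, Real.sin_sub]
    ring
  simp only [expand]
  simp only [Finset.mul_sum]
  rw [Finset.sum_comm]
  refine Finset.sum_congr rfl fun k _ => ?_
  have h2 : ∑ i, (1:ℝ)/2 * (c i * (2 * Real.sin (Ω k * x i) *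
      (b k * Real.cos (Ω k * xbar) - a k * Real.sin (Ω k * xbar))))
      = (∑ i, Real.sin (Ω k * x i) * c i) *
        (b k * Real.cos (Ω k * xbar) - a k * Real.sin (Ω k * xbar)) := by
    rw [Finset.sum_mul]
    exact Finset.sum_congr rfl fun i _ => by ring
  rw [h2, hck]
end

section
/- Let Ω_1 < … < Ω_r be positive reals, and let f(x) = a_0 + Σ_{k=1}^r (a_k cos(Ω_k x) + b_k sin(Ω_k x)) with real coefficients. Let d be an even positive integer, let x_0,x_1,…,x_r ∈ ℝ be such that the (r+1)×(r+1) matrix A with first column all ones and A_{i,k} = cos(Ω_k x_i) is invertible, and let c ∈ ℝ^{r+1} solve Aᵀ c = q where q_0 = 0 and q_k = (-1)^{d/2} Ω_k^d for k ≥ 1. Then for every x̄ ∈ ℝ, f^{(d)}(x̄) = (1/2)·Σ_{i=0}^r c_i·(f(x̄ + x_i) + f(x̄ - x_i)). -/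
open Real Finset Matrix

private lemma hasDerivAt_trig (ω a b y : ℝ) :
    HasDerivAt (fun x => a * Real.cos (ω * x) + b * Real.sin (ω * x))
      ((b * ω) * Real.cos (ω * y) + (-(a * ω)) * Real.sin (ω * y)) y := by
  have hω : HasDerivAt (fun x : ℝ => ω * x) ω y := by
    simpa using (hasDerivAt_id y).const_mul ω
  have hc : HasDerivAt (fun x => Real.cos (ω * x)) (-Real.sin (ω * y) * ω) y := hω.cos
  have hs : HasDerivAt (fun x => Real.sin (ω * x)) (Real.cos (ω * y) * ω) y := hω.sin
  have := (hc.const_mul a).add (hs.const_mul b)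
  refine this.congr_deriv ?_
  ring

private lemma trig_contDiff (ω a b : ℝ) (n : ℕ) :
    ContDiff ℝ n (fun x => a * Real.cos (ω * x) + b * Real.sin (ω * x)) := by
  exact (contDiff_const.mul (Real.contDiff_cos.comp (contDiff_const.mul contDiff_id))).add
    (contDiff_const.mul (Real.contDiff_sin.comp (contDiff_const.mul contDiff_id)))

private lemma deriv_trig (ω a b : ℝ) :
    deriv (fun x => a * Real.cos (ω * x) + b * Real.sin (ω * x)) =
      fun x => (b * ω) * Real.cos (ω * x) + (-(a * ω)) * Real.sin (ω * x) :=
  funext fun y => (hasDerivAt_trig ω a b y).deriv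

private lemma key_even (ω : ℝ) (m : ℕ) : ∀ a b : ℝ,
    iteratedDeriv (2 * m) (fun x => a * Real.cos (ω * x) + b * Real.sin (ω * x)) =
      fun x => (-1 : ℝ) ^ m * ω ^ (2 * m) * (a * Real.cos (ω * x) + b * Real.sin (ω * x)) := by
  induction m with
  | zero => intro a b; simp
  | succ m ih =>
    intro a b
    have h2 : (2 * (m + 1)) = (2 * m) + 1 + 1 := by ring
    rw [h2, iteratedDeriv_succ', iteratedDeriv_succ', deriv_trig, deriv_trig,
      show (-(a*ω))*ω = -(a*ω^2) by ring, show -(b*ω*ω) = -(b*ω^2) by ring,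
      ih (-(a*ω^2)) (-(b*ω^2))]
    funext y
    ring

private lemma iteratedDeriv_fin_sum {ι : Type*} [Fintype ι] (n : ℕ) (g : ι → ℝ → ℝ)
    (h : ∀ k, ContDiff ℝ n (g k)) (y : ℝ) :
    iteratedDeriv n (fun x => ∑ k, g k x) y = ∑ k, iteratedDeriv n (g k) y := by
  simp only [iteratedDeriv]
  rw [iteratedFDeriv_sum (fun j _ => h j)]
  simp

theorem epsr_even (r : ℕ) (hr : 0 < r) (Ω : Fin r → ℝ)
    (hΩpos : ∀ k, 0 < Ω k) (hΩmono : StrictMono Ω)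
    (a0 : ℝ) (a b : Fin r → ℝ) (f : ℝ → ℝ)
    (hf : ∀ x, f x = a0 + ∑ k, (a k * Real.cos (Ω k * x) + b k * Real.sin (Ω k * x)))
    (d : ℕ) (hd : Even d) (hdpos : 0 < d)
    (x : Fin (r + 1) → ℝ) (A : Matrix (Fin (r + 1)) (Fin (r + 1)) ℝ)
    (hA : ∀ i, A i = Fin.cons 1 (fun k => Real.cos (Ω k * x i)))
    (hinv : IsUnit A)
    (c : Fin (r + 1) → ℝ)
    (hc : Aᵀ.mulVec c = Fin.cons 0 (fun k => (-1 : ℝ) ^ (d / 2) * Ω k ^ d)) :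
    ∀ xbar : ℝ, iteratedDeriv d f xbar =
      (1 / 2) * ∑ i, c i * (f (xbar + x i) + f (xbar - x i)) := by
  intro xbar
  obtain ⟨m, hm⟩ := hd
  have hdm : d = 2 * m := by omega
  have hd2 : d / 2 = m := by omega
  -- the two linear conditions from hc
  have hc0 : ∑ i, c i = 0 := by
    have := congrFun hc 0
    simpa [Matrix.mulVec, Matrix.transpose, dotProduct, hA] using this
  have hck : ∀ k : Fin r, ∑ i, Real.cos (Ω k * x i) * c i = (-1 : ℝ) ^ m * Ω k ^ d := by
    intro k
    have := congrFun hc k.succ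
    simpa [Matrix.mulVec, Matrix.transpose, dotProduct, hA, hd2] using this
  have hfun : f = fun x => a0 + ∑ k, (a k * Real.cos (Ω k * x) + b k * Real.sin (Ω k * x)) :=
    funext hf
  -- LHS computation
  have hLHS : iteratedDeriv d f xbar =
      ∑ k, (-1 : ℝ) ^ m * Ω k ^ d * (a k * Real.cos (Ω k * xbar) + b k * Real.sin (Ω k * xbar)) := by
    rw [hfun]
    have h1 : iteratedDeriv d
        (fun x => a0 + ∑ k, (a k * Real.cos (Ω k * x) + b k * Real.sin (Ω k * x))) xbar =
        iteratedDeriv d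
        (fun x => ∑ k, (a k * Real.cos (Ω k * x) + b k * Real.sin (Ω k * x))) xbar := by
      simp only [← iteratedDerivWithin_univ]
      exact iteratedDerivWithin_const_add hdpos a0
    rw [h1, iteratedDeriv_fin_sum d _ (fun k => trig_contDiff (Ω k) (a k) (b k) d)]
    refine Finset.sum_congr rfl fun k _ => ?_
    rw [hdm, key_even (Ω k) m (a k) (b k)]
  rw [hLHS]
  simp only [hf]
  -- RHS computation
  have hsum : ∀ i, ((a0 + ∑ k, (a k * Real.cos (Ω k * (xbar + x i)) + b k * Real.sin (Ω k * (xbar + x i)))) +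
      (a0 + ∑ k, (a k * Real.cos (Ω k * (xbar - x i)) + b k * Real.sin (Ω k * (xbar - x i))))) =
      2 * a0 + 2 * ∑ k, Real.cos (Ω k * x i) *
        (a k * Real.cos (Ω k * xbar) + b k * Real.sin (Ω k * xbar)) := by
    intro i
    have h1 : ∀ k : Fin r, ((a k * Real.cos (Ω k * (xbar + x i)) + b k * Real.sin (Ω k * (xbar + x i))) +
        (a k * Real.cos (Ω k * (xbar - x i)) + b k * Real.sin (Ω k * (xbar - x i)))) =
        2 * (Real.cos (Ω k * x i) * (a k * Real.cos (Ω k * xbar) + b k * Real.sin (Ω k * xbar))) := by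
      intro k
      have hcc : Real.cos (Ω k * (xbar + x i)) + Real.cos (Ω k * (xbar - x i)) =
          2 * Real.cos (Ω k * xbar) * Real.cos (Ω k * x i) := by
        rw [show Ω k * (xbar + x i) = Ω k * xbar + Ω k * x i by ring,
          show Ω k * (xbar - x i) = Ω k * xbar - Ω k * x i by ring,
          Real.cos_add, Real.cos_sub]
        ring
      have hss : Real.sin (Ω k * (xbar + x i)) + Real.sin (Ω k * (xbar - x i)) =
          2 * Real.sin (Ω k * xbar) * Real.cos (Ω k * x i) := by
        rw [show Ω k * (xbar + x i) = Ω k * xbar + Ω k * x i by ring,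
          show Ω k * (xbar - x i) = Ω k * xbar - Ω k * x i by ring,
          Real.sin_add, Real.sin_sub]
        ring
      linear_combination a k * hcc + b k * hss
    have hS : ∑ k, ((a k * Real.cos (Ω k * (xbar + x i)) + b k * Real.sin (Ω k * (xbar + x i))) +
        (a k * Real.cos (Ω k * (xbar - x i)) + b k * Real.sin (Ω k * (xbar - x i)))) =
        ∑ k, 2 * (Real.cos (Ω k * x i) * (a k * Real.cos (Ω k * xbar) + b k * Real.sin (Ω k * xbar))) :=
      Finset.sum_congr rfl fun k _ => h1 k
    have hD := Finset.sum_add_distrib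
      (s := (Finset.univ : Finset (Fin r)))
      (f := fun k => a k * Real.cos (Ω k * (xbar + x i)) + b k * Real.sin (Ω k * (xbar + x i)))
      (g := fun k => a k * Real.cos (Ω k * (xbar - x i)) + b k * Real.sin (Ω k * (xbar - x i)))
    rw [Finset.mul_sum, ← hS, hD]
    ring
  calc ∑ k, (-1 : ℝ) ^ m * Ω k ^ d * (a k * Real.cos (Ω k * xbar) + b k * Real.sin (Ω k * xbar))
      = ∑ k, (∑ i, Real.cos (Ω k * x i) * c i) *
        (a k * Real.cos (Ω k * xbar) + b k * Real.sin (Ω k * xbar)) := by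
        refine Finset.sum_congr rfl fun k _ => ?_; rw [hck k]
    _ = ∑ i, c i * ∑ k, Real.cos (Ω k * x i) *
        (a k * Real.cos (Ω k * xbar) + b k * Real.sin (Ω k * xbar)) := by
        simp only [Finset.sum_mul, Finset.mul_sum]
        rw [Finset.sum_comm]
        exact Finset.sum_congr rfl fun i _ => Finset.sum_congr rfl fun k _ => by ring
    _ = (1 / 2) * ∑ i, c i * ((a0 + ∑ k, (a k * Real.cos (Ω k * (xbar + x i)) + b k * Real.sin (Ω k * (xbar + x i)))) +
        (a0 + ∑ k, (a k * Real.cos (Ω k * (xbar - x i)) + b k * Real.sin (Ω k * (xbar - x i))))) := by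
        simp only [hsum]
        rw [Finset.mul_sum]
        have hterm : ∀ i ∈ (Finset.univ : Finset (Fin (r + 1))),
            (1 / 2 : ℝ) * (c i * (2 * a0 + 2 * ∑ k, Real.cos (Ω k * x i) *
              (a k * Real.cos (Ω k * xbar) + b k * Real.sin (Ω k * xbar)))) =
            a0 * c i + c i * ∑ k, Real.cos (Ω k * x i) *
              (a k * Real.cos (Ω k * xbar) + b k * Real.sin (Ω k * xbar)) := fun i _ => by ring
        rw [Finset.sum_congr rfl hterm, Finset.sum_add_distrib, ← Finset.mul_sum, hc0,
          mul_zero, zero_add]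
end

section
/- Let r ≥ 1, let d be an odd positive integer, and let x_1,…,x_r ∈ ℝ be any nodes such that the r×r matrix A(x) with entries A_{i,k} = sin(k·x_i) is invertible. Let b(x) = (A(x)ᵀ)⁻¹ p where p_k = (-1)^{(d-1)/2} k^d. Then ‖b(x)‖₁ ≥ r^d, with equality when x_i = π/(2r) + (i-1)π/r. -/
open Real Finset Matrix

-- sin(A+B) sin(A-B) = sin A ^2 - sin B ^2
lemma sinsq (A B : ℝ) : Real.sin (A+B) * Real.sin (A-B) = Real.sin A^2 - Real.sin B^2 := by
  rw [Real.sin_add, Real.sin_sub]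
  have hA := Real.sin_sq_add_cos_sq A
  have hB := Real.sin_sq_add_cos_sq B
  nlinarith [hA, hB]

-- Abel summation
lemma abel_sum (a u : ℕ → ℝ) (n : ℕ) :
    ∑ m ∈ range n, a m * u m =
      ∑ m ∈ range n, (a m - a (m+1)) * (∑ j ∈ range (m+1), u j)
        + a n * (∑ j ∈ range n, u j) := by
  induction n with
  | zero => simp
  | succ n ih =>
    rw [sum_range_succ, ih, sum_range_succ (fun m => (a m - a (m+1)) * (∑ j ∈ range (m+1), u j)),
      sum_range_succ u]
    ring

-- telescoping cosine sum
lemma cos_tel (θ : ℝ) (n : ℕ) :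
    2 * Real.sin θ * ∑ i ∈ range n, Real.cos ((2*(i:ℝ)+1)*θ) = Real.sin (2*(n:ℝ)*θ) := by
  induction n with
  | zero => simp
  | succ n ih =>
    rw [sum_range_succ, mul_add, ih]
    push_cast
    have h1 : (2*((n:ℝ)+1))*θ = (2*(n:ℝ)+1)*θ + θ := by ring
    have h2 : (2*(n:ℝ))*θ = (2*(n:ℝ)+1)*θ - θ := by ring
    rw [h1, h2, Real.sin_add, Real.sin_sub]
    ring

noncomputable def Xn (r : ℕ) (i : ℕ) : ℝ := (2*(i:ℝ)+1)*π/(2*(r:ℝ))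

lemma cos_npi (n : ℕ) : Real.cos ((n:ℝ) * π) = (-1:ℝ)^n := by
  induction n with
  | zero => simp
  | succ n ih => push_cast; rw [add_mul, one_mul, Real.cos_add]; simp [ih]; ring

lemma sin_rX (r : ℕ) (hr : 0 < r) (i : ℕ) : Real.sin ((r:ℝ) * Xn r i) = (-1:ℝ)^i := by
  have h : (r:ℝ) * Xn r i = π/2 + (i:ℝ)*π := by
    unfold Xn; field_simp; ring
  rw [h, Real.sin_add, Real.sin_pi_div_two, Real.cos_pi_div_two, Real.sin_nat_mul_pi, cos_npi]
  ring

lemma cos_rX (r : ℕ) (hr : 0 < r) (i : ℕ) : Real.cos ((r:ℝ) * Xn r i) = 0 := by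
  have h : (r:ℝ) * Xn r i = π/2 + (i:ℝ)*π := by
    unfold Xn; field_simp; ring
  rw [h, Real.cos_add, Real.sin_pi_div_two, Real.cos_pi_div_two, Real.sin_nat_mul_pi]
  ring

lemma cos2rX (r : ℕ) (hr : 0 < r) (i : ℕ) : Real.cos (2*(r:ℝ) * Xn r i) = -1 := by
  have h : 2*(r:ℝ) * Xn r i = (i:ℕ) * (2*π) + π := by
    unfold Xn; field_simp
  rw [h, Real.cos_nat_mul_two_pi_add_pi]

-- S1
lemma sum_cos_X (r m : ℕ) (hr : 0 < r) (h1 : 1 ≤ m) (h2 : m < 2*r) :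
    ∑ i ∈ range r, Real.cos ((m:ℝ) * Xn r i) = 0 := by
  set θ := (m:ℝ)*π/(2*(r:ℝ)) with hθ
  have hrr : (0:ℝ) < r := by exact_mod_cast hr
  have hθpos : 0 < θ := by
    apply div_pos (by positivity) (by positivity)
  have hθlt : θ < π := by
    rw [hθ, div_lt_iff₀ (by positivity)]
    have : (m:ℝ) < 2*r := by exact_mod_cast h2
    nlinarith [Real.pi_pos]
  have hs : 0 < Real.sin θ := Real.sin_pos_of_pos_of_lt_pi hθpos hθlt
  have key : ∀ i : ℕ, (m:ℝ) * Xn r i = (2*(i:ℝ)+1)*θ := by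
    intro i; unfold Xn; rw [hθ]; field_simp; try ring
  have := cos_tel θ r
  have h2r : 2*(r:ℝ)*θ = (m:ℝ)*π := by rw [hθ]; field_simp; try ring
  rw [h2r, Real.sin_nat_mul_pi] at this
  have hsum : ∑ i ∈ range r, Real.cos ((m:ℝ) * Xn r i)
      = ∑ i ∈ range r, Real.cos ((2*(i:ℝ)+1)*θ) := by
    apply sum_congr rfl; intro i _; rw [key i]
  rw [hsum]
  have h2s : 2 * Real.sin θ ≠ 0 := by positivity
  exact (mul_eq_zero.mp this).resolve_left h2s

lemma orth (r k l : ℕ) (hr : 0 < r) (hk1 : 1 ≤ k) (hk2 : k ≤ r) (hl1 : 1 ≤ l) (hl2 : l ≤ r) :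
    ∑ i ∈ range r, Real.sin ((k:ℝ) * Xn r i) * Real.sin ((l:ℝ) * Xn r i)
      = if k = l then (if k = r then (r:ℝ) else (r:ℝ)/2) else 0 := by
  have hterm : ∀ i : ℕ, Real.sin ((k:ℝ) * Xn r i) * Real.sin ((l:ℝ) * Xn r i)
      = (Real.cos (((k:ℝ)-l) * Xn r i) - Real.cos (((k:ℝ)+l) * Xn r i))/2 := by
    intro i
    have h := Real.cos_sub_cos (((k:ℝ)-l) * Xn r i) (((k:ℝ)+l) * Xn r i)
    have e1 : ((((k:ℝ)-l) * Xn r i) + (((k:ℝ)+l) * Xn r i))/2 = (k:ℝ) * Xn r i := by ring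
    have e2 : ((((k:ℝ)-l) * Xn r i) - (((k:ℝ)+l) * Xn r i))/2 = -((l:ℝ) * Xn r i) := by ring
    rw [e1, e2, Real.sin_neg] at h
    linarith
  rw [sum_congr rfl (fun i _ => hterm i), ← sum_div, sum_sub_distrib]
  have hB : ∑ i ∈ range r, Real.cos (((k:ℝ)+l) * Xn r i)
      = if k + l = 2*r then -(r:ℝ) else 0 := by
    split_ifs with h
    · have : ∀ i ∈ range r, Real.cos (((k:ℝ)+l) * Xn r i) = -1 := by
        intro i _
        have : ((k:ℝ)+l) = 2*(r:ℝ) := by exact_mod_cast h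
        rw [this, cos2rX r hr i]
      rw [sum_congr rfl this]; simp
    · have hc : ((k:ℝ)+l) = ((k+l : ℕ) : ℝ) := by push_cast; ring
      rw [hc]
      exact sum_cos_X r (k+l) hr (by omega) (by omega)
  have hA : ∑ i ∈ range r, Real.cos (((k:ℝ)-l) * Xn r i)
      = if k = l then (r:ℝ) else 0 := by
    split_ifs with h
    · subst h; simp
    · rcases Nat.lt_or_ge k l with hkl | hkl
      · have : ∀ i ∈ range r, Real.cos (((k:ℝ)-l) * Xn r i)
            = Real.cos (((l-k : ℕ):ℝ) * Xn r i) := by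
          intro i _
          have : ((k:ℝ)-l) * Xn r i = -(((l-k : ℕ):ℝ) * Xn r i) := by
            have : ((l-k : ℕ):ℝ) = (l:ℝ) - k := by
              push_cast [Nat.cast_sub (le_of_lt hkl)]; ring
            rw [this]; ring
          rw [this, Real.cos_neg]
        rw [sum_congr rfl this]
        exact sum_cos_X r (l-k) hr (by omega) (by omega)
      · have hkl' : l < k := by omega
        have : ∀ i ∈ range r, Real.cos (((k:ℝ)-l) * Xn r i)
            = Real.cos (((k-l : ℕ):ℝ) * Xn r i) := by
          intro i _
          have : ((k-l : ℕ):ℝ) = (k:ℝ) - l := by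
            push_cast [Nat.cast_sub (le_of_lt hkl')]; ring
          rw [this]
        rw [sum_congr rfl this]
        exact sum_cos_X r (k-l) hr (by omega) (by omega)
  rw [hA, hB]
  split_ifs <;> first | ring1 | (exfalso; omega)

noncomputable def uu (t : ℝ) (m : ℕ) : ℝ := if m = 0 then 1 else 2 * Real.cos ((m:ℝ)*t)
noncomputable def VV (t : ℝ) (m : ℕ) : ℝ := ∑ j ∈ range (m+1), uu t j
noncomputable def WW (t : ℝ) (m : ℕ) : ℝ := ∑ j ∈ range (m+1), VV t j

lemma dirichlet (t : ℝ) (m : ℕ) :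
    Real.sin (t/2) * VV t m = Real.sin ((2*(m:ℝ)+1) * (t/2)) := by
  induction m with
  | zero => norm_num [VV, uu]
  | succ m ih =>
    have : VV t (m+1) = VV t m + uu t (m+1) := by
      unfold VV; rw [sum_range_succ]
    rw [this, mul_add, ih]
    unfold uu
    simp only [Nat.succ_ne_zero, if_false]
    push_cast
    have e1 : (2*((m:ℝ)+1)+1) * (t/2) = ((m:ℝ)+1)*t + t/2 := by ring
    have e2 : (2*(m:ℝ)+1) * (t/2) = ((m:ℝ)+1)*t - t/2 := by ring
    rw [e1, e2, Real.sin_add, Real.sin_sub]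
    ring

lemma fejer (t : ℝ) (m : ℕ) :
    Real.sin (t/2)^2 * WW t m = Real.sin (((m:ℝ)+1) * (t/2))^2 := by
  induction m with
  | zero => norm_num [WW, VV, uu]
  | succ m ih =>
    have hW : WW t (m+1) = WW t m + VV t (m+1) := by
      unfold WW; rw [sum_range_succ]
    have hd := dirichlet t (m+1)
    have key := sinsq (((m:ℝ)+1+1) * (t/2)) (((m:ℝ)+1) * (t/2))
    have e1 : (((m:ℝ)+1+1) * (t/2)) + (((m:ℝ)+1) * (t/2)) = (2*((m:ℝ)+1)+1) * (t/2) := by ring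
    have e2 : (((m:ℝ)+1+1) * (t/2)) - (((m:ℝ)+1) * (t/2)) = t/2 := by ring
    rw [e1, e2] at key
    rw [hW, mul_add, ih]
    have hv : Real.sin (t/2)^2 * VV t (m+1) = Real.sin (t/2) * Real.sin ((2*((m:ℕ)+1:ℕ)+1) * (t/2)) := by
      rw [pow_two, mul_assoc, hd]
    rw [hv]
    push_cast at key ⊢
    linear_combination key

lemma WW_nonneg (t : ℝ) (ht : Real.sin (t/2) ≠ 0) (m : ℕ) : 0 ≤ WW t m := by
  have h := fejer t m
  have h2 : 0 < Real.sin (t/2)^2 := by positivity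
  nlinarith [sq_nonneg (Real.sin (((m:ℝ)+1) * (t/2)))]

lemma H_nonneg (r d : ℕ) (hr : 0 < r) (hd : d ≠ 0) (t : ℝ) (ht : Real.sin (t/2) ≠ 0) :
    0 ≤ ∑ m ∈ range r, (((r - m : ℕ):ℝ)^d) * uu t m := by
  set a : ℕ → ℝ := fun m => (((r - m : ℕ):ℝ))^d with ha
  have har : ∀ m, r ≤ m → a m = 0 := by
    intro m h
    simp only [ha]
    rw [Nat.sub_eq_zero_of_le h]
    simp [zero_pow hd]
  have hconv : ∀ m, 2 * a (m+1) ≤ a m + a (m+2) := by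
    intro m
    rcases Nat.lt_or_ge (m+2) (r+1) with h | h
    · have hp : r - m = (r - m - 2) + 2 := by omega
      have hp1 : r - (m+1) = (r - m - 2) + 1 := by omega
      have hp2 : r - (m+2) = r - m - 2 := by omega
      set p := r - m - 2
      simp only [ha, hp, hp1, hp2]
      push_cast
      have hcv := (convexOn_pow d).2 (Set.mem_Ici.mpr (by positivity : (0:ℝ) ≤ (p:ℝ)))
        (Set.mem_Ici.mpr (by positivity : (0:ℝ) ≤ (p:ℝ)+2))
        (by norm_num : (0:ℝ) ≤ 1/2) (by norm_num : (0:ℝ) ≤ 1/2) (by norm_num : (1/2:ℝ)+1/2 = 1)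
      simp only [smul_eq_mul] at hcv
      have he : (1/2:ℝ) * (p:ℝ) + (1/2) * ((p:ℝ)+2) = (p:ℝ)+1 := by ring
      rw [he] at hcv
      linarith
    · have h1 : a (m+1) = 0 := har _ (by omega)
      have h2 : a (m+2) = 0 := har _ (by omega)
      rw [h1, h2]
      have : 0 ≤ a m := by simp only [ha]; positivity
      linarith
  have step1 : ∑ m ∈ range r, a m * uu t m = ∑ m ∈ range r, (a m - a (m+1)) * VV t m := by
    have h1 := abel_sum a (uu t) r
    rw [har r le_rfl, zero_mul, add_zero] at h1
    exact h1
  have step2 : ∑ m ∈ range r, (a m - a (m+1)) * VV t m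
      = ∑ m ∈ range r, ((a m - a (m+1)) - (a (m+1) - a (m+2))) * WW t m := by
    have h2 := abel_sum (fun m => a m - a (m+1)) (VV t) r
    simp only [har r le_rfl, har (r+1) (by omega : r ≤ r+1), sub_zero, zero_mul,
      add_zero, zero_sub, neg_zero] at h2
    exact h2
  rw [step1, step2]
  apply sum_nonneg
  intro m _
  apply mul_nonneg
  · have := hconv m; linarith
  · exact WW_nonneg t ht m

lemma part2 (r : ℕ) (hr : 0 < r) (d : ℕ) (hd : Odd d)
    (A : Matrix (Fin r) (Fin r) ℝ)
    (hA : ∀ i k : Fin r,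
        A i k = Real.sin ((((k : ℕ) : ℝ) + 1) * (π / (2 * r) + (i : ℕ) * (π / r))))
    (bv : Fin r → ℝ)
    (hb : Aᵀ.mulVec bv =
        (fun k : Fin r => (-1 : ℝ) ^ ((d - 1) / 2) * (((k : ℕ) : ℝ) + 1) ^ d)) :
    ∑ i, |bv i| = (r : ℝ) ^ d := by
  have hrR : (0:ℝ) < r := by exact_mod_cast hr
  have hd0 : d ≠ 0 := by rcases hd with ⟨j, hj⟩; omega
  set e := (d - 1) / 2 with he
  set p : Fin r → ℝ := fun k => (-1 : ℝ) ^ e * (((k : ℕ) : ℝ) + 1) ^ d with hp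
  -- rewrite A in terms of Xn
  have hx : ∀ i : Fin r, (π / (2 * (r:ℝ)) + ((i:ℕ):ℝ) * (π / (r:ℝ))) = Xn r i := by
    intro i; unfold Xn; field_simp; ring
  have hAsin : ∀ i k : Fin r, A i k = Real.sin (((((k:ℕ)+1 : ℕ)):ℝ) * Xn r (i:ℕ)) := by
    intro i k
    rw [hA i k, ← hx i]
    congr 1
    push_cast
    ring
  -- the diagonal weights
  set dw : Fin r → ℝ := fun k => if (k:ℕ)+1 = r then (r:ℝ) else (r:ℝ)/2 with hdw
  have hdwpos : ∀ k, 0 < dw k := by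
    intro k; simp only [hdw]; split_ifs <;> positivity
  have hAtA : Aᵀ * A = Matrix.diagonal dw := by
    ext k l
    rw [Matrix.mul_apply, Matrix.diagonal_apply]
    set g : ℕ → ℝ := fun j => Real.sin ((((k:ℕ)+1 : ℕ):ℝ) * Xn r j) * Real.sin ((((l:ℕ)+1 : ℕ):ℝ) * Xn r j) with hg
    have hterm : ∀ i : Fin r, Aᵀ k i * A i l = g (i:ℕ) := by
      intro i
      rw [Matrix.transpose_apply, hAsin i k, hAsin i l]
    rw [Finset.sum_congr rfl (fun i _ => hterm i),
      Fin.sum_univ_eq_sum_range g r, hg]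
    rw [orth r ((k:ℕ)+1) ((l:ℕ)+1) hr (by omega) (by omega : (k:ℕ)+1 ≤ r) (by omega) (by omega : (l:ℕ)+1 ≤ r)]
    by_cases hkl : k = l
    · subst hkl
      simp only [if_pos rfl, hdw]
    · rw [if_neg (fun h : (k:ℕ)+1 = (l:ℕ)+1 => hkl (Fin.ext (by omega))), if_neg hkl]
  -- invertibility
  have hdetAtA : (Aᵀ * A).det = A.det ^ 2 := by
    rw [Matrix.det_mul, Matrix.det_transpose]; ring
  have hdetdiag : (Matrix.diagonal dw).det = ∏ k, dw k := Matrix.det_diagonal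
  have hprodpos : 0 < ∏ k, dw k := Finset.prod_pos (fun k _ => hdwpos k)
  have hdetA : IsUnit A.det := by
    rw [isUnit_iff_ne_zero]
    intro h0
    rw [hAtA, hdetdiag] at hdetAtA
    rw [h0] at hdetAtA
    simp at hdetAtA
    rw [← hdetAtA] at hprodpos
    exact lt_irrefl _ hprodpos
  have hAT : IsUnit (Aᵀ).det := by rwa [Matrix.det_transpose]
  -- explicit solution
  set c : Fin r → ℝ := fun k => p k / dw k with hc
  set b' : Fin r → ℝ := A.mulVec c with hb'
  have hAb' : Aᵀ.mulVec b' = p := by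
    rw [hb', Matrix.mulVec_mulVec, hAtA]
    funext k
    rw [Matrix.mulVec_diagonal]
    simp only [hc]
    field_simp
    exact mul_div_cancel_left₀ (p k) (hdwpos k).ne'
  have hbveq : bv = b' := by
    have hinj := Matrix.mulVec_injective_iff_isUnit.mpr
      ((Matrix.isUnit_iff_isUnit_det _).mpr hAT)
    exact hinj (hb.trans hAb'.symm)
  rw [hbveq]
  -- sign of b'
  have hsinr : ∀ i : Fin r, Real.sin ((r:ℝ) * Xn r (i:ℕ)) = (-1:ℝ)^(i:ℕ) := fun i => sin_rX r hr i
  have hflip : ∀ (i : Fin r) (n : ℕ), n ≤ r →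
      (-1:ℝ)^(i:ℕ) * Real.sin ((n:ℝ) * Xn r (i:ℕ)) = Real.cos (((r - n : ℕ):ℝ) * Xn r (i:ℕ)) := by
    intro i n hn
    have hcast : ((r - n : ℕ):ℝ) = (r:ℝ) - n := by
      push_cast [Nat.cast_sub hn]; ring
    rw [hcast, sub_mul, Real.cos_sub, cos_rX r hr, hsinr i]
    ring
  have hsign : ∀ i : Fin r,
      (-1:ℝ)^e * (-1:ℝ)^(i:ℕ) * b' i
        = (1/(r:ℝ)) * ∑ m ∈ range r, (((r - m : ℕ):ℝ)^d) * uu (Xn r (i:ℕ)) m := by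
    intro i
    have hbi : b' i = ∑ k : Fin r, Real.sin ((((k:ℕ)+1 : ℕ):ℝ) * Xn r (i:ℕ)) * c k := by
      rw [hb']
      simp only [Matrix.mulVec, dotProduct]
      exact Finset.sum_congr rfl (fun k _ => by rw [hAsin i k])
    rw [hbi, Finset.mul_sum]
    -- convert to range sum and reflect
    set g : ℕ → ℝ := fun j => (((j+1 : ℕ):ℝ)^d / (if j+1 = r then (r:ℝ) else (r:ℝ)/2))
            * Real.cos (((r - (j+1) : ℕ):ℝ) * Xn r (i:ℕ)) with hg
    have hterm : ∀ k : Fin r,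
        (-1:ℝ)^e * (-1:ℝ)^(i:ℕ) * (Real.sin ((((k:ℕ)+1 : ℕ):ℝ) * Xn r (i:ℕ)) * c k)
        = g (k:ℕ) := by
      intro k
      simp only [hg]
      simp only [hc, hp, hdw]
      have h1 : (-1:ℝ)^e * (-1:ℝ)^(i:ℕ) * (Real.sin ((((k:ℕ)+1 : ℕ):ℝ) * Xn r (i:ℕ)) *
          ((-1 : ℝ) ^ e * (((k:ℕ) : ℝ) + 1) ^ d / (if (k:ℕ)+1 = r then (r:ℝ) else (r:ℝ)/2)))
          = ((-1:ℝ)^e * (-1:ℝ)^e) * ((((k:ℕ) : ℝ) + 1) ^ d / (if (k:ℕ)+1 = r then (r:ℝ) else (r:ℝ)/2))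
            * ((-1:ℝ)^(i:ℕ) * Real.sin ((((k:ℕ)+1 : ℕ):ℝ) * Xn r (i:ℕ))) := by ring
      rw [h1, hflip i ((k:ℕ)+1) (by omega : (k:ℕ)+1 ≤ r)]
      have h2 : (-1:ℝ)^e * (-1:ℝ)^e = 1 := by
        rw [← pow_add, ← two_mul, pow_mul]; norm_num
      rw [h2, one_mul]
      push_cast
      ring
    rw [Finset.sum_congr rfl (fun k _ => hterm k), Fin.sum_univ_eq_sum_range g r]
    rw [← Finset.sum_range_reflect g r]
    simp only [hg]
    rw [Finset.mul_sum]
    apply Finset.sum_congr rfl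
    intro m hm
    have hmr : m < r := Finset.mem_range.mp hm
    have e1 : r - 1 - m + 1 = r - m := by omega
    have e2 : r - (r - m) = m := by omega
    rw [e1, e2]
    rcases Nat.eq_zero_or_pos m with h0 | h1
    · subst h0
      rw [if_pos (by omega : r - 0 = r)]
      simp only [Nat.sub_zero, uu, if_pos rfl]
      field_simp
      simp
    · rw [if_neg (by omega : ¬ (r - m = r))]
      simp only [uu, if_neg (by omega : ¬ (m = 0))]
      field_simp
  have hpos : ∀ i : Fin r, 0 ≤ (-1:ℝ)^e * (-1:ℝ)^(i:ℕ) * b' i := by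
    intro i
    rw [hsign i]
    have ht2 : Real.sin ((Xn r (i:ℕ))/2) ≠ 0 := by
      have h1 : 0 < (Xn r (i:ℕ))/2 := by
        unfold Xn
        have : (0:ℝ) < (2*((i:ℕ):ℝ)+1) := by positivity
        positivity
      have h2 : (Xn r (i:ℕ))/2 < π := by
        unfold Xn
        have hi : ((i:ℕ):ℝ) < r := by exact_mod_cast i.2
        have hr1 : (1:ℝ) ≤ r := by exact_mod_cast hr
        have h3 : (2*((i:ℕ):ℝ)+1) < 4*(r:ℝ) := by nlinarith
        rw [div_div, div_lt_iff₀ (by positivity : (0:ℝ) < 2*(r:ℝ)*2)]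
        nlinarith [Real.pi_pos]
      exact ne_of_gt (Real.sin_pos_of_pos_of_lt_pi h1 h2)
    have := H_nonneg r d hr hd0 (Xn r (i:ℕ)) ht2
    positivity
  have habs : ∀ i : Fin r, |b' i| = (-1:ℝ)^e * (-1:ℝ)^(i:ℕ) * b' i := by
    intro i
    have hs := hpos i
    rcases Nat.even_or_odd (e + (i:ℕ)) with hpar | hpar
    · have h1 : (-1:ℝ)^e * (-1:ℝ)^(i:ℕ) = 1 := by
        rw [← pow_add, Even.neg_one_pow hpar]
      rw [h1] at hs ⊢
      rw [one_mul] at hs ⊢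
      exact abs_of_nonneg hs
    · have h1 : (-1:ℝ)^e * (-1:ℝ)^(i:ℕ) = -1 := by
        rw [← pow_add, Odd.neg_one_pow hpar]
      rw [h1] at hs ⊢
      have : b' i ≤ 0 := by linarith
      rw [abs_of_nonpos this]
      ring
  rw [Finset.sum_congr rfl (fun i _ => habs i)]
  -- now compute the signed sum
  have hswap : ∑ i : Fin r, (-1:ℝ)^e * (-1:ℝ)^(i:ℕ) * b' i
      = ∑ k : Fin r, ((-1:ℝ)^e * c k) * (∑ i : Fin r, (-1:ℝ)^(i:ℕ) * Real.sin ((((k:ℕ)+1:ℕ):ℝ) * Xn r (i:ℕ))) := by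
    have hbi : ∀ i : Fin r, b' i = ∑ k : Fin r, Real.sin ((((k:ℕ)+1 : ℕ):ℝ) * Xn r (i:ℕ)) * c k := by
      intro i
      rw [hb']
      simp only [Matrix.mulVec, dotProduct]
      exact Finset.sum_congr rfl (fun k _ => by rw [hAsin i k])
    rw [Finset.sum_congr rfl (fun i _ => by rw [hbi i, Finset.mul_sum])]
    rw [Finset.sum_comm]
    apply Finset.sum_congr rfl
    intro k _
    rw [Finset.mul_sum]
    apply Finset.sum_congr rfl
    intro i _
    ring
  have hinner : ∀ k : Fin r, (∑ i : Fin r, (-1:ℝ)^(i:ℕ) * Real.sin ((((k:ℕ)+1:ℕ):ℝ) * Xn r (i:ℕ)))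
      = if r = (k:ℕ)+1 then (r:ℝ) else 0 := by
    intro k
    set g : ℕ → ℝ := fun j => Real.sin (((r:ℕ):ℝ) * Xn r j) * Real.sin ((((k:ℕ)+1:ℕ):ℝ) * Xn r j) with hg
    have hterm : ∀ i : Fin r, (-1:ℝ)^(i:ℕ) * Real.sin ((((k:ℕ)+1:ℕ):ℝ) * Xn r (i:ℕ))
        = g (i:ℕ) := by
      intro i
      simp only [hg]
      rw [sin_rX r hr (i:ℕ)]
    rw [Finset.sum_congr rfl (fun i _ => hterm i), Fin.sum_univ_eq_sum_range g r, hg]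
    rw [orth r r ((k:ℕ)+1) hr (by omega) le_rfl (by omega) (by omega : (k:ℕ)+1 ≤ r)]
    split_ifs with h1 h2 h3 <;> first | rfl | omega
  rw [hswap, Finset.sum_congr rfl (fun k _ => by rw [hinner k])]
  set klast : Fin r := ⟨r - 1, by omega⟩ with hkl
  rw [Finset.sum_eq_single klast]
  · rw [if_pos (by simp [hkl]; omega : r = (klast:ℕ)+1)]
    simp only [hc, hp, hdw]
    rw [if_pos (by simp [hkl]; omega : (klast:ℕ)+1 = r)]
    have hcast : ((klast:ℕ):ℝ) + 1 = (r:ℝ) := by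
      simp [hkl]
      have : (r - 1 : ℕ) + 1 = r := by omega
      exact_mod_cast congrArg (Nat.cast : ℕ → ℝ) this
    rw [hcast]
    have h2 : (-1:ℝ)^e * (-1:ℝ)^e = 1 := by
      rw [← pow_add, ← two_mul, pow_mul]; norm_num
    field_simp
    linear_combination h2
  · intro b _ hbne
    rw [if_neg]
    · ring
    · intro hcon
      apply hbne
      apply Fin.ext
      simp [hkl]
      omega
  · intro hcon
    exact absurd (Finset.mem_univ klast) hcon

theorem l1_norm_coeffs_ge (r : ℕ) (hr : 0 < r) (d : ℕ) (hd : Odd d) :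
    (∀ (x : Fin r → ℝ) (A : Matrix (Fin r) (Fin r) ℝ),
      (∀ i k : Fin r, A i k = Real.sin ((((k : ℕ) : ℝ) + 1) * x i)) →
      IsUnit A →
      ∀ bv : Fin r → ℝ,
        Aᵀ.mulVec bv =
          (fun k : Fin r => (-1 : ℝ) ^ ((d - 1) / 2) * (((k : ℕ) : ℝ) + 1) ^ d) →
        (r : ℝ) ^ d ≤ ∑ i, |bv i|) ∧
    (∀ (A : Matrix (Fin r) (Fin r) ℝ),
      (∀ i k : Fin r,
        A i k = Real.sin ((((k : ℕ) : ℝ) + 1) * (π / (2 * r) + (i : ℕ) * (π / r)))) →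
      ∀ bv : Fin r → ℝ,
        Aᵀ.mulVec bv =
          (fun k : Fin r => (-1 : ℝ) ^ ((d - 1) / 2) * (((k : ℕ) : ℝ) + 1) ^ d) →
        ∑ i, |bv i| = (r : ℝ) ^ d) := by
  constructor
  · intro x A hA _ bv hb
    set e := (d - 1) / 2 with he
    have hk0 : r - 1 < r := by omega
    set k0 : Fin r := ⟨r - 1, hk0⟩ with hk0'
    have hcast : (((k0 : ℕ) : ℝ) + 1) = (r : ℝ) := by
      simp [hk0']
      have : (r - 1 : ℕ) + 1 = r := by omega
      exact_mod_cast congrArg (Nat.cast : ℕ → ℝ) this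
    have h1 : ∑ i, A i k0 * bv i = (-1 : ℝ) ^ e * (r : ℝ) ^ d := by
      have := congrFun hb k0
      simp only [Matrix.mulVec, Matrix.transpose_apply, dotProduct] at this
      rw [this, hcast]
    have h2 : (r : ℝ) ^ d = ∑ i, (-1 : ℝ) ^ e * (A i k0 * bv i) := by
      rw [← Finset.mul_sum, h1, ← mul_assoc, ← pow_add, ← two_mul, pow_mul]
      norm_num
    rw [h2]
    apply Finset.sum_le_sum
    intro i _
    have h3 : |(-1 : ℝ) ^ e * (A i k0 * bv i)| ≤ |bv i| := by
      rw [abs_mul, abs_mul, abs_pow, abs_neg, abs_one, one_pow, one_mul]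
      have : |A i k0| ≤ 1 := by rw [hA]; exact Real.abs_sin_le_one _
      nlinarith [abs_nonneg (bv i), abs_nonneg (A i k0)]
    exact le_trans (le_abs_self _) h3
  · intro A hA bv hb
    exact part2 r hr d hd A hA bv hb
end
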